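/- arXiv:1001.2156 — 12 statements merged into one kernel-verified Lean document; each statement's English description precedes it below -/
import Mathlib

section
/- For every power q = 3^f with f ≥ 1 of 3, the sum ∑_{k=0}^{q-1} C(2k,k) is divisible by q. -/
open Finset

/-- `ee i n` is the coefficient of `x^n` in `(1-4x)^{-(2i+1)/2}`. -/
def ee : ℕ → ℕ → ℕ
  | 0, n => (2 * n).choose n
  | _+1, 0 => 1
  | i+1, n+1 => 4 * ee (i+1) n + ee i (n+1)

lemma ee_zero (i : ℕ) : ee i 0 = 1 := by cases i <;> simp [ee]

lemma ee_zero' (n : ℕ) : ee 0 n = (2*n).choose n := by simp [ee]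

lemma ee_succ_succ (i n : ℕ) : ee (i+1) (n+1) = 4 * ee (i+1) n + ee i (n+1) := by
  simp [ee]

lemma ee_pos (i n : ℕ) : 0 < ee i n := by
  induction i generalizing n with
  | zero => simp only [ee]; exact Nat.choose_pos (by omega)
  | succ i ih =>
    induction n with
    | zero => simp [ee]
    | succ n ihn => rw [ee_succ_succ]; omega

lemma dagger (i n : ℕ) :
    (2*i).choose i * (2*n+2*i+4).choose (n+i+2) * (n+i+2).choose (i+1)
      = 4 * ((2*i).choose i * (2*n+2*i+2).choose (n+i+1) * (n+i+1).choose (i+1))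
        + (2*i+2).choose (i+1) * (2*n+2*i+2).choose (n+i+1) * (n+i+1).choose i := by
  have key : ((2*i).choose i : ℚ) * (2*n+2*i+4).choose (n+i+2) * (n+i+2).choose (i+1)
      = 4 * ((2*i).choose i * (2*n+2*i+2).choose (n+i+1) * (n+i+1).choose (i+1))
        + (2*i+2).choose (i+1) * (2*n+2*i+2).choose (n+i+1) * (n+i+1).choose i := by
    rw [Nat.cast_choose ℚ (show i ≤ 2*i by omega),
        Nat.cast_choose ℚ (show n+i+2 ≤ 2*n+2*i+4 by omega),
        Nat.cast_choose ℚ (show i+1 ≤ n+i+2 by omega),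
        Nat.cast_choose ℚ (show n+i+1 ≤ 2*n+2*i+2 by omega),
        Nat.cast_choose ℚ (show i+1 ≤ n+i+1 by omega),
        Nat.cast_choose ℚ (show i ≤ n+i+1 by omega),
        Nat.cast_choose ℚ (show i+1 ≤ 2*i+2 by omega)]
    rw [show 2*i - i = i by omega, show 2*n+2*i+4 - (n+i+2) = n+i+2 by omega,
        show n+i+2 - (i+1) = n+1 by omega, show 2*n+2*i+2 - (n+i+1) = n+i+1 by omega,
        show n+i+1 - (i+1) = n by omega, show n+i+1 - i = n+1 by omega,
        show 2*i+2 - (i+1) = i+1 by omega]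
    have e1 : ((2*n+2*i+4).factorial : ℚ)
        = (2*n+2*i+4) * ((2*n+2*i+3) * (2*n+2*i+2).factorial) := by
      rw [show 2*n+2*i+4 = (2*n+2*i+3)+1 by omega, Nat.factorial_succ,
          show 2*n+2*i+3 = (2*n+2*i+2)+1 by omega, Nat.factorial_succ]
      push_cast; ring
    have e2 : ((n+i+2).factorial : ℚ) = (n+i+2) * (n+i+1).factorial := by
      rw [show n+i+2 = (n+i+1)+1 by omega, Nat.factorial_succ]; push_cast; ring
    have e3 : ((i+1).factorial : ℚ) = (i+1) * i.factorial := by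
      rw [Nat.factorial_succ]; push_cast; ring
    have e4 : ((n+1).factorial : ℚ) = (n+1) * n.factorial := by
      rw [Nat.factorial_succ]; push_cast; ring
    have e5 : ((2*i+2).factorial : ℚ) = (2*i+2) * ((2*i+1) * (2*i).factorial) := by
      rw [show 2*i+2 = (2*i+1)+1 by omega, Nat.factorial_succ,
          show 2*i+1 = (2*i)+1 by omega, Nat.factorial_succ]
      push_cast; ring
    rw [e1, e2, e3, e4, e5]
    have p1 : ((2*n+2*i+2).factorial : ℚ) ≠ 0 := by positivity
    have p2 : ((n+i+1).factorial : ℚ) ≠ 0 := by positivity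
    have p3 : ((2*i).factorial : ℚ) ≠ 0 := by positivity
    have p4 : (i.factorial : ℚ) ≠ 0 := by positivity
    have p5 : (n.factorial : ℚ) ≠ 0 := by positivity
    field_simp
    ring
  exact_mod_cast key

lemma ee_closed (i n : ℕ) :
    (2*i).choose i * ee i n = (2*n+2*i).choose (n+i) * (n+i).choose i := by
  induction i generalizing n with
  | zero => simp [ee]
  | succ i ih =>
    induction n with
    | zero => simp [ee_zero]
    | succ n ihn =>
      apply Nat.eq_of_mul_eq_mul_left (Nat.choose_pos (show i ≤ 2*i by omega))
      rw [ee_succ_succ]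
      have h1 := ihn
      have h2 := ih (n+1)
      have h3 := dagger i n
      simp only [show 2*(i+1) = 2*i+2 by omega, show 2*n+2*(i+1) = 2*n+2*i+2 by omega,
        show n+(i+1) = n+i+1 by omega, show 2*(n+1)+2*i = 2*n+2*i+2 by omega,
        show n+1+i = n+i+1 by omega, show 2*(n+1)+2*(i+1) = 2*n+2*i+4 by omega,
        show (n+1)+(i+1) = n+i+2 by omega, show 2*n+(2*i+2) = 2*n+2*i+2 by omega,
        show 2*(n+1)+(2*i+2) = 2*n+2*i+4 by omega] at h1 h2 ⊢
      zify at h1 h2 h3 ⊢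
      linear_combination 4*(((2*i).choose i : ℤ))*h1 + (((2*i+2).choose (i+1) : ℤ))*h2 - h3

def SS (i n : ℕ) : ℕ := ∑ j ∈ range n, ee i j

lemma SS_step (i n : ℕ) : (SS i (n+1) : ℤ) = ee (i+1) n - 3 * SS (i+1) n := by
  induction n with
  | zero => simp [SS, ee_zero]
  | succ n ihn =>
    have h1 : SS i (n+2) = SS i (n+1) + ee i (n+1) := by
      simp [SS, Finset.sum_range_succ]
    have h2 : SS (i+1) (n+1) = SS (i+1) n + ee (i+1) n := by
      simp [SS, Finset.sum_range_succ]
    have h3 := ee_succ_succ i n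
    push_cast [h1, h2, h3] at *
    linarith

lemma SS_expand : ∀ m n : ℕ, m ≤ n →
    (SS 0 n : ℤ) = (∑ j ∈ range m, (-3:ℤ)^j * (ee (j+1) (n - (j+1)) : ℤ))
      + (-3)^m * (SS m (n - m) : ℤ) := by
  intro m
  induction m with
  | zero => intro n _; simp
  | succ m ih =>
    intro n hmn
    rw [ih n (by omega)]
    have key : (SS m (n - m) : ℤ)
        = ee (m+1) (n - (m+1)) - 3 * SS (m+1) (n - (m+1)) := by
      have h2 : n - m = (n - (m+1)) + 1 := by omega
      rw [h2]; exact SS_step m (n - (m+1))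
    rw [key, Finset.sum_range_succ]
    ring

lemma two_sq_lt (i : ℕ) : 2 * i^2 < 3^i ∨ i = 0 := by
  induction i with
  | zero => right; rfl
  | succ i ih =>
    left
    rcases Nat.lt_or_ge i 2 with h0 | h0
    · interval_cases i <;> norm_num
    rcases ih with h | h
    · have h1 : 2*(i+1)^2 ≤ 3*(2*i^2) := by nlinarith
      have h2 : 3^(i+1) = 3*3^i := by ring
      omega
    · omega

lemma lemE (i : ℕ) (hi : 1 ≤ i) :
    i.factorization 3 + ((2*i).choose i).factorization 3 + 1 ≤ i := by
  have h2 : (2:ℕ)*i^2 < 3^i := by rcases two_sq_lt i with h | h; exact h; omega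
  have ha : 3 ^ i.factorization 3 ≤ i := Nat.ordProj_le 3 (by omega)
  have hb : 3 ^ ((2*i).choose i).factorization 3 ≤ 2*i :=
    Nat.pow_factorization_choose_le (by omega)
  have hc : 3 ^ (i.factorization 3 + ((2*i).choose i).factorization 3) ≤ 2 * i^2 := by
    rw [pow_add]
    calc 3 ^ i.factorization 3 * 3 ^ ((2*i).choose i).factorization 3 ≤ i * (2*i) :=
      Nat.mul_le_mul ha hb
    _ = 2 * i^2 := by ring
  have hlt : 3 ^ (i.factorization 3 + ((2*i).choose i).factorization 3) < 3 ^ i :=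
    lt_of_le_of_lt hc h2
  have := (Nat.pow_lt_pow_iff_right (by norm_num)).mp hlt
  omega

lemma lemD (f i : ℕ) (hi : 1 ≤ i) (hiq : i ≤ 3^f) :
    f + 1 ≤ i + (ee i (3^f - i)).factorization 3 := by
  set q := 3^f with hqdef
  have hq0 : q ≠ 0 := by positivity
  -- identity q * C(q-1, i-1) = C(q,i) * i
  have hident : q * (q-1).choose (i-1) = q.choose i * i := by
    have := Nat.add_one_mul_choose_eq (q-1) (i-1)
    have e1 : q-1+1 = q := by omega
    have e2 : i-1+1 = i := by omega
    rwa [e1, e2] at this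
  have hC1 : 0 < q.choose i := Nat.choose_pos hiq
  have hX : 0 < (q-1).choose (i-1) := Nat.choose_pos (by omega)
  have hfq : q.factorization 3 = f := by
    rw [hqdef, Nat.Prime.factorization_pow (by norm_num), Finsupp.single_eq_same]
  -- factorization of identity
  have hfac1 : f + ((q-1).choose (i-1)).factorization 3
      = (q.choose i).factorization 3 + i.factorization 3 := by
    have := congrArg (fun m => m.factorization 3) hident
    simp only [Nat.factorization_mul hq0 hX.ne', Nat.factorization_mul hC1.ne' (by omega : i ≠ 0),
      Finsupp.add_apply] at this
    omega
  -- closed form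
  have hcf := ee_closed i (q - i)
  rw [show q - i + i = q by omega, show 2*(q-i)+2*i = 2*q by omega] at hcf
  have hC2 : 0 < (2*q).choose q := Nat.choose_pos (by omega)
  have hC3 : 0 < (2*i).choose i := Nat.choose_pos (by omega)
  have hE : 0 < ee i (q - i) := ee_pos _ _
  have hfac2 : ((2*i).choose i).factorization 3 + (ee i (q-i)).factorization 3
      = ((2*q).choose q).factorization 3 + (q.choose i).factorization 3 := by
    have := congrArg (fun m => m.factorization 3) hcf
    simp only [Nat.factorization_mul hC3.ne' hE.ne', Nat.factorization_mul hC2.ne' hC1.ne',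
      Finsupp.add_apply] at this
    omega
  have hE1 := lemE i hi
  omega

theorem stmt_1 (f : ℕ) (hf : 1 ≤ f) (q : ℕ) (hq : q = 3 ^ f) :
    q ∣ ∑ k ∈ Finset.range q, (2 * k).choose k := by
  subst hq
  have hfq : f ≤ 3^f := le_of_lt (Nat.lt_pow_self (by norm_num : 1 < 3))
  have hdvd : ((3:ℤ)^f) ∣ (SS 0 (3^f) : ℤ) := by
    rw [SS_expand f (3^f) hfq]
    apply dvd_add
    · apply Finset.dvd_sum
      intro j hj
      simp only [Finset.mem_range] at hj
      have hfact : f + 1 ≤ (j+1) + (ee (j+1) (3^f - (j+1))).factorization 3 :=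
        lemD f (j+1) (by omega) (by omega)
      have hdvde : (3:ℕ)^(f - j) ∣ ee (j+1) (3^f - (j+1)) :=
        (Nat.Prime.pow_dvd_iff_le_factorization (by norm_num)
          (ee_pos _ _).ne').mpr (by omega)
      obtain ⟨c, hc⟩ := hdvde
      have hcz : ((ee (j+1) (3^f - (j+1)) : ℕ) : ℤ) = 3^(f-j) * c := by exact_mod_cast hc
      rw [hcz]
      have hsplit : (3:ℤ)^f = 3^j * 3^(f-j) := by
        rw [← pow_add]; congr 1; omega
      rw [hsplit]
      exact mul_dvd_mul ⟨(-1)^j, by rw [neg_pow]; ring⟩ (dvd_mul_right _ _)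
    · exact Dvd.dvd.mul_right ⟨(-1)^f, by rw [neg_pow]; ring⟩ _
  have : (3^f : ℕ) ∣ SS 0 (3^f) := by
    have := Int.natCast_dvd_natCast.mp (by push_cast; exact_mod_cast hdvd)
    exact this
  simpa [SS, ee_zero'] using this
end

section
/- For every positive integer n, the identity ∑_{k=0}^{n-1} C(2k,k) = n·C(2n,n)·∑_{k=1}^{n} ((-3)^{k-1}/k)·C(2k,k)^{-1}·C(n-1,k-1) holds as an identity of rational numbers. -/
/-- coefficient c j = (-3)^j / ((j+1) * C(2j+2, j+1)) -/
noncomputable def myc (j : ℕ) : ℚ := (-3) ^ j / ((j + 1) * (Nat.centralBinom (j + 1) : ℚ))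

/-- telescoping certificate -/
noncomputable def myg (n i : ℕ) : ℚ :=
  2 * (-3) ^ i * ((n - 1).choose i : ℚ) / ((i + 1) * (Nat.centralBinom (i + 1) : ℚ))

lemma cb_ne (m : ℕ) : (Nat.centralBinom m : ℚ) ≠ 0 := by
  exact_mod_cast (Nat.centralBinom_pos m).ne'

lemma cb_rec (m : ℕ) :
    ((m : ℚ) + 1) * (Nat.centralBinom (m + 1) : ℚ)
      = 2 * (2 * m + 1) * (Nat.centralBinom m : ℚ) := by
  exact_mod_cast congrArg (Nat.cast : ℕ → ℚ) (Nat.succ_mul_centralBinom_succ m)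

lemma tele (n i : ℕ) (h : i < n) :
    ((3 * n + 2) * myc i + 2 * (2 * n + 1) * myc (i + 1)) * ((n - 1).choose i : ℚ)
      = myg n i - myg n (i + 1) := by
  have hA := cb_ne (i + 1)
  have hB := cb_ne (i + 2)
  have hrec := cb_rec (i + 1)
  have hC : ((i : ℚ) + 1) * ((n - 1).choose (i + 1) : ℚ)
      = ((n - 1).choose i : ℚ) * ((n : ℚ) - 1 - i) := by
    have h1 : (n - 1 : ℕ).choose (i + 1) * (i + 1) = (n - 1 : ℕ).choose i * (n - 1 - i) := 
      Nat.choose_succ_right_eq (n - 1) i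
    have h2 : ((n - 1 - i : ℕ) : ℚ) = (n : ℚ) - 1 - i := by
      have : i ≤ n - 1 := Nat.le_sub_one_of_lt h
      push_cast [Nat.sub_sub, Nat.cast_sub (by omega : 1 + i ≤ n)]
      ring
    calc ((i : ℚ) + 1) * ((n - 1).choose (i + 1) : ℚ)
        = (((n - 1 : ℕ).choose (i + 1) * (i + 1) : ℕ) : ℚ) := by push_cast; ring
      _ = (((n - 1 : ℕ).choose i * (n - 1 - i) : ℕ) : ℚ) := by rw [h1]
      _ = ((n - 1).choose i : ℚ) * ((n : ℚ) - 1 - i) := by push_cast [h2]; ring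
  have hi1 : ((i : ℚ) + 1) ≠ 0 := by positivity
  have hi2 : ((i : ℚ) + 2) ≠ 0 := by positivity
  have hB' : (Nat.centralBinom (i + 2) : ℚ)
      = 2 * (2 * (i : ℚ) + 3) * (Nat.centralBinom (i + 1) : ℚ) / ((i : ℚ) + 2) := by
    rw [eq_div_iff hi2]
    push_cast at hrec ⊢
    linarith [hrec]
  have hC' : ((n - 1).choose (i + 1) : ℚ)
      = ((n - 1).choose i : ℚ) * ((n : ℚ) - 1 - i) / ((i : ℚ) + 1) := by
    rw [eq_div_iff hi1]
    linarith [hC]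
  unfold myc myg
  push_cast [hB', hC']
  field_simp
  ring

lemma tele_sum (n : ℕ) (hn : 0 < n) :
    ∑ i ∈ Finset.range n,
        ((3 * n + 2) * myc i + 2 * (2 * n + 1) * myc (i + 1)) * ((n - 1).choose i : ℚ)
      = 1 := by
  rw [Finset.sum_congr rfl fun i hi => tele n i (Finset.mem_range.mp hi),
    Finset.sum_range_sub' (myg n)]
  have h0 : myg n 0 = 1 := by
    unfold myg
    rw [show Nat.centralBinom 1 = 2 from rfl]
    norm_num
  have hn' : myg n n = 0 := by
    unfold myg
    rw [Nat.choose_eq_zero_of_lt (by omega)]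
    simp
  rw [h0, hn']
  ring

lemma step_sum (n : ℕ) :
    2 * (2 * (n : ℚ) + 1) * ∑ j ∈ Finset.range (n + 1), myc j * ((n).choose j : ℚ)
      = (n : ℚ) * ∑ j ∈ Finset.range n, myc j * ((n - 1).choose j : ℚ) + 1 := by
  rcases n with _ | m
  · norm_num [myc, show Nat.centralBinom 1 = 2 from rfl]
  · set n := m + 1 with hn
    have key := tele_sum n (Nat.succ_pos m)
    have hsplit : ∑ j ∈ Finset.range (n + 1), myc j * ((n).choose j : ℚ)
        = ∑ i ∈ Finset.range n, myc (i + 1) * ((n).choose (i + 1) : ℚ) + myc 0 := by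
      rw [Finset.sum_range_succ' (fun j => myc j * ((n).choose j : ℚ)) n]
      norm_num
    have hpascal : ∀ i, ((n).choose (i + 1) : ℚ)
        = ((n - 1).choose i : ℚ) + ((n - 1).choose (i + 1) : ℚ) := by
      intro i
      have : n.choose (i + 1) = m.choose i + m.choose (i + 1) := Nat.choose_succ_succ m i
      simp only [hn, Nat.add_sub_cancel]
      exact_mod_cast this
    have hshift : ∑ i ∈ Finset.range n, myc (i + 1) * ((n - 1).choose (i + 1) : ℚ)
        = ∑ j ∈ Finset.range n, myc j * ((n - 1).choose j : ℚ) - myc 0 := by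
      have e1 : ∑ j ∈ Finset.range (n + 1), myc j * ((n - 1).choose j : ℚ)
          = ∑ i ∈ Finset.range n, myc (i + 1) * ((n - 1).choose (i + 1) : ℚ) + myc 0 := by
        rw [Finset.sum_range_succ' (fun j => myc j * ((n - 1).choose j : ℚ)) n]
        norm_num
      have e2 : ∑ j ∈ Finset.range (n + 1), myc j * ((n - 1).choose j : ℚ)
          = ∑ j ∈ Finset.range n, myc j * ((n - 1).choose j : ℚ) := by
        rw [Finset.sum_range_succ, Nat.choose_eq_zero_of_lt (by omega)]
        simp
      rw [e2] at e1
      linarith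
    calc 2 * (2 * (n : ℚ) + 1) * ∑ j ∈ Finset.range (n + 1), myc j * ((n).choose j : ℚ)
        = 2 * (2 * (n : ℚ) + 1) *
            (∑ i ∈ Finset.range n, (myc (i + 1) * ((n - 1).choose i : ℚ)
              + myc (i + 1) * ((n - 1).choose (i + 1) : ℚ)) + myc 0) := by
          rw [hsplit]
          congr 2
          refine Finset.sum_congr rfl fun i _ => ?_
          rw [hpascal i]; ring
      _ = 2 * (2 * (n : ℚ) + 1) *
            (∑ i ∈ Finset.range n, myc (i + 1) * ((n - 1).choose i : ℚ)
              + ∑ i ∈ Finset.range n, myc i * ((n - 1).choose i : ℚ)) := by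
          rw [Finset.sum_add_distrib, hshift]; ring
      _ = (n : ℚ) * ∑ j ∈ Finset.range n, myc j * ((n - 1).choose j : ℚ)
            + ∑ i ∈ Finset.range n,
                ((3 * n + 2) * myc i + 2 * (2 * n + 1) * myc (i + 1))
                  * ((n - 1).choose i : ℚ) := by
          rw [Finset.sum_congr rfl (fun i _ => by
            ring : ∀ i ∈ Finset.range n,
              ((3 * (n:ℚ) + 2) * myc i + 2 * (2 * n + 1) * myc (i + 1))
                * ((n - 1).choose i : ℚ)
              = (3 * (n:ℚ) + 2) * (myc i * ((n - 1).choose i : ℚ))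
                + 2 * (2 * n + 1) * (myc (i + 1) * ((n - 1).choose i : ℚ))),
            Finset.sum_add_distrib, ← Finset.mul_sum, ← Finset.mul_sum]
          ring
      _ = (n : ℚ) * ∑ j ∈ Finset.range n, myc j * ((n - 1).choose j : ℚ) + 1 := by
          rw [key]

lemma main_id (n : ℕ) :
    (∑ k ∈ Finset.range n, (Nat.centralBinom k : ℚ))
      = (n : ℚ) * (Nat.centralBinom n : ℚ)
          * ∑ j ∈ Finset.range n, myc j * ((n - 1).choose j : ℚ) := by
  induction n with
  | zero => simp
  | succ n ih =>
    simp only [Nat.add_sub_cancel]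
    push_cast
    rw [Finset.sum_range_succ, ih]
    have hrec := cb_rec n
    have hstep := step_sum n
    have hne := cb_ne n
    calc (n : ℚ) * (Nat.centralBinom n : ℚ)
            * ∑ j ∈ Finset.range n, myc j * ((n - 1).choose j : ℚ)
          + (Nat.centralBinom n : ℚ)
        = (Nat.centralBinom n : ℚ)
            * ((n : ℚ) * ∑ j ∈ Finset.range n, myc j * ((n - 1).choose j : ℚ) + 1) := by
          ring
      _ = (Nat.centralBinom n : ℚ)
            * (2 * (2 * (n : ℚ) + 1)
              * ∑ j ∈ Finset.range (n + 1), myc j * ((n).choose j : ℚ)) := by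
          rw [hstep]
      _ = ((n : ℚ) + 1) * (Nat.centralBinom (n + 1) : ℚ)
            * ∑ j ∈ Finset.range (n + 1), myc j * ((n).choose j : ℚ) := by
          rw [hrec]; ring

theorem stmt_2 (n : ℕ) (hn : 0 < n) :
    (∑ k ∈ Finset.range n, ((2 * k).choose k : ℚ)) =
      (n : ℚ) * ((2 * n).choose n : ℚ) *
        ∑ k ∈ Finset.Icc 1 n,
          ((-3 : ℚ) ^ (k - 1) / (k : ℚ)) * (((2 * k).choose k : ℚ))⁻¹ *
            ((n - 1).choose (k - 1) : ℚ) := by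
  have h := main_id n
  have hIcc : ∑ k ∈ Finset.Icc 1 n,
        ((-3 : ℚ) ^ (k - 1) / (k : ℚ)) * (((2 * k).choose k : ℚ))⁻¹ *
          ((n - 1).choose (k - 1) : ℚ)
      = ∑ j ∈ Finset.range n, myc j * ((n - 1).choose j : ℚ) := by
    rw [← Finset.Ico_add_one_right_eq_Icc, Finset.sum_Ico_eq_sum_range]
    refine Finset.sum_congr (by norm_num) fun j _ => ?_
    have h1 : 1 + j - 1 = j := by omega
    have h2 : (2 * (1 + j)).choose (1 + j) = Nat.centralBinom (j + 1) := by
      rw [Nat.centralBinom, Nat.add_comm 1 j]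
    rw [h1, h2, myc, div_mul_eq_div_div]
    push_cast
    simp only [div_eq_mul_inv]
    ring
  rw [hIcc]
  exact h
end

section
/- For every positive integer n and integer k with 1 ≤ k ≤ n, the identity C(n-1/2, n-k) = (2^{2k-1}/k)·C(n-1,k-1)·C(2k,k)^{-1}·C(n-1/2,n-1) holds. -/
theorem choose_step (x : ℚ) (m : ℕ) : Ring.choose x (m+1) * (m+1) = Ring.choose x m * (x - m) := by
  have h1 := Ring.descPochhammer_eq_factorial_smul_choose x (m+1)
  have h2 := Ring.descPochhammer_eq_factorial_smul_choose x m
  rw [descPochhammer_succ_right, Polynomial.smeval_mul, Polynomial.smeval_sub,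
    Polynomial.smeval_X, Polynomial.smeval_natCast, h2] at h1
  have hf' : (m.factorial : ℚ) ≠ 0 := by positivity
  rw [Nat.factorial_succ] at h1
  field_simp at h1
  have h3 : (m.factorial:ℚ) * (Ring.choose x (m+1) * (m+1)) = (m.factorial:ℚ) * (Ring.choose x m * (x-m)) := by linear_combination -h1
  exact mul_left_cancel₀ hf' h3

theorem stmt_4 (n k : ℕ) (hk : 1 ≤ k) (hkn : k ≤ n) :
    Ring.choose ((n : ℚ) - 1/2) (n - k) =
      (2 : ℚ) ^ (2 * k - 1) / (k : ℚ) * ((n - 1).choose (k - 1) : ℚ) *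
        (((2 * k).choose k : ℚ))⁻¹ * Ring.choose ((n : ℚ) - 1/2) (n - 1) := by
  induction k, hk using Nat.le_induction with
  | base => norm_num
  | succ k hk ih =>
    have hkn' : k ≤ n := by omega
    have ih := ih hkn'
    have hm : n - (k+1) + 1 = n - k := by omega
    have hstep := choose_step ((n : ℚ) - 1/2) (n - (k+1))
    rw [hm] at hstep
    have hcast : ((n - (k+1) : ℕ) : ℚ) = (n:ℚ) - k - 1 := by
      push_cast [Nat.cast_sub hkn]
      ring
    rw [hcast] at hstep
    have ha : ((n-1).choose k : ℚ) * k = ((n-1).choose (k-1) : ℚ) * ((n:ℚ) - k) := by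
      have h := Nat.choose_succ_right_eq (n-1) (k-1)
      have hk1 : k - 1 + 1 = k := by omega
      rw [hk1] at h
      have h2 : (n - 1) - (k - 1) = n - k := by omega
      rw [h2] at h
      have h3 := congrArg (Nat.cast : ℕ → ℚ) h
      push_cast [Nat.cast_sub hkn'] at h3
      linarith [h3]
    have hb : ((2*(k+1)).choose (k+1) : ℚ) * ((k:ℚ)+1)^2 = ((2*k).choose k : ℚ) * (2*k+1) * (2*k+2) := by
      rw [Nat.cast_choose ℚ (by omega : k+1 ≤ 2*(k+1)), Nat.cast_choose ℚ (by omega : k ≤ 2*k)]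
      have e1 : 2*(k+1) = (2*k+1)+1 := by ring
      have e2 : 2*(k+1) - (k+1) = k+1 := by omega
      have e3 : 2*k - k = k := by omega
      rw [e2, e3, e1]
      rw [Nat.factorial_succ, Nat.factorial_succ, Nat.factorial_succ]
      have hf1 : ((k.factorial : ℚ)) ≠ 0 := by positivity
      have hf2 : (((2*k).factorial : ℚ)) ≠ 0 := by positivity
      field_simp
      push_cast
      ring
    have hbpos : (0:ℚ) < ((2*k).choose k : ℚ) := by
      exact_mod_cast Nat.choose_pos (by omega : k ≤ 2*k)
    have hbpos2 : (0:ℚ) < ((2*(k+1)).choose (k+1) : ℚ) := by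
      exact_mod_cast Nat.choose_pos (by omega : k+1 ≤ 2*(k+1))
    have hkpos : (0:ℚ) < (k:ℚ) := by exact_mod_cast hk
    have hbne : ((2*k).choose k : ℚ) ≠ 0 := hbpos.ne'
    have hbne2 : ((2*(k+1)).choose (k+1) : ℚ) ≠ 0 := hbpos2.ne'
    have hkne : (k:ℚ) ≠ 0 := hkpos.ne'
    have hpow : (2:ℚ) ^ (2*(k+1)-1) = 2 ^ (2*k-1) * 4 := by
      have h5 : 2*(k+1)-1 = (2*k-1)+2 := by omega
      rw [h5, pow_add]; norm_num
    rw [ih] at hstep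
    have hhalf : (n:ℚ) - 1/2 - ((n:ℚ) - k - 1) = (k:ℚ) + 1/2 := by ring
    rw [hhalf] at hstep
    have hne : (k:ℚ) + 1/2 ≠ 0 := by positivity
    rw [hpow]
    field_simp at hstep ⊢
    have hMne : ((k:ℚ) * ((2*k).choose k) * (2*(k:ℚ)+1) * ((k:ℚ)+1)) ≠ 0 := by positivity
    apply mul_right_cancel₀ hMne
    rw [Nat.add_sub_cancel]; push_cast
    linear_combination (Ring.choose (((n:ℚ)*2-1)/2) (n-(k+1)) * (k:ℚ) * ((2*k).choose k : ℚ) * (2*(k:ℚ)+1)) * hb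
      - (((2*k).choose k : ℚ) * (2*(k:ℚ)+1) * (2*(k:ℚ)+2)) * hstep
      - (2 * 2^(2*k-1) * Ring.choose (((n:ℚ)*2-1)/2) (n-1) * ((2*k).choose k : ℚ) * (2*(k:ℚ)+1) * (2*(k:ℚ)+2)) * ha
end

section
/- Let p be a prime and let p^e ≤ p^f = q be powers of p with e ≤ f. Then for every integer k with 0 < k < p^e, the binomial coefficient C(q,k) satisfies C(q,k) ≡ (-1)^{k-1}·q/k (mod p^{2f-2e+2}), i.e. k·C(q,k) ≡ (-1)^{k-1}·q (mod k·p^{2f-2e+2}) after clearing denominators appropriately. -/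
-- norm of a natural number 0 < m < p^e is at least p^{-(e-1)}, phrased as inverse bound
private lemma aux_norm_nat (p : ℕ) [hp : Fact p.Prime] (e : ℕ) (m : ℕ) (hm : 0 < m)
    (hm' : m < p ^ e) : ‖(m : ℚ_[p])‖⁻¹ ≤ (p : ℝ) ^ ((e : ℤ) - 1) := by
  have hm0 : (m : ℚ) ≠ 0 := by exact_mod_cast hm.ne'
  have hv : padicValNat p m < e := by
    by_contra h
    push_neg at h
    have : p ^ e ≤ p ^ padicValNat p m := Nat.pow_le_pow_right hp.out.pos h
    have hd : p ^ padicValNat p m ≤ m := Nat.le_of_dvd hm (pow_padicValNat_dvd)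
    omega
  have : ‖(m : ℚ_[p])‖ = (p : ℝ) ^ (-(padicValNat p m : ℤ)) := by
    rw [show ((m : ℚ_[p])) = ((m : ℚ) : ℚ_[p]) by norm_cast, Padic.eq_padicNorm,
      padicNorm.eq_zpow_of_nonzero hm0, padicValRat.of_nat]
    push_cast
    ring_nf
  rw [this, ← zpow_neg, neg_neg]
  have hp1 : (1 : ℝ) ≤ (p : ℝ) := by exact_mod_cast hp.out.one_lt.le
  exact zpow_le_zpow_right₀ hp1 (by omega)

private lemma aux_qdiv (p : ℕ) [hp : Fact p.Prime] (e f : ℕ) (he : 0 < e) (hef : e ≤ f)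
    (m : ℕ) (hm : 0 < m) (hm' : m < p ^ e) :
    ‖(p : ℚ_[p]) ^ f / (m : ℚ_[p])‖ ≤ (p : ℝ) ^ (-((f : ℤ) - e + 1)) := by
  have hnm : ‖(p : ℚ_[p]) ^ f‖ = (p : ℝ) ^ (-(f : ℤ)) := by
    rw [norm_pow, Padic.norm_p, inv_pow, ← zpow_natCast, ← zpow_neg]
  rw [norm_div, hnm, div_eq_mul_inv]
  calc (p : ℝ) ^ (-(f : ℤ)) * ‖(m : ℚ_[p])‖⁻¹
      ≤ (p : ℝ) ^ (-(f : ℤ)) * (p : ℝ) ^ ((e : ℤ) - 1) := by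
        apply mul_le_mul_of_nonneg_left (aux_norm_nat p e m hm hm')
        positivity
    _ = (p : ℝ) ^ (-((f : ℤ) - e + 1)) := by
        rw [← zpow_add₀ (by exact_mod_cast hp.out.pos.ne' : (p : ℝ) ≠ 0)]
        ring_nf

set_option maxHeartbeats 1000000 in
private lemma aux_choose (p : ℕ) [hp : Fact p.Prime] (e f : ℕ) (he : 0 < e) (hef : e ≤ f) :
    ∀ m : ℕ, m < p ^ e →
      ‖((p ^ f - 1).choose m : ℚ_[p]) - (-1 : ℚ_[p]) ^ m‖ ≤ (p : ℝ) ^ (-((f : ℤ) - e + 1)) := by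
  intro m
  induction m with
  | zero =>
      intro _
      simp
      positivity
  | succ n ih =>
      intro hlt
      have hn := ih (by omega)
      have hq1 : 1 ≤ p ^ f := Nat.one_le_pow _ _ hp.out.pos
      have hnq : n + 1 ≤ p ^ f := le_trans (le_of_lt hlt) (Nat.pow_le_pow_right hp.out.pos hef)
      -- identity: (q-1).choose (n+1) * (n+1) = (q-1).choose n * (q-1-n)
      have hid : ((p ^ f - 1).choose (n + 1) : ℚ_[p]) * (n + 1) =
          ((p ^ f - 1).choose n : ℚ_[p]) * ((p : ℚ_[p]) ^ f - 1 - n) := by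
        have := Nat.choose_succ_right_eq (p ^ f - 1) n
        have hcast : ((p ^ f - 1 - n : ℕ) : ℚ_[p]) = (p : ℚ_[p]) ^ f - 1 - n := by
          have : n ≤ p ^ f - 1 := by omega
          push_cast [Nat.cast_sub this, Nat.cast_sub hq1]
          ring
        calc ((p ^ f - 1).choose (n + 1) : ℚ_[p]) * (n + 1)
            = (((p ^ f - 1).choose (n + 1) * (n + 1) : ℕ) : ℚ_[p]) := by push_cast; ring
          _ = (((p ^ f - 1).choose n * (p ^ f - 1 - n) : ℕ) : ℚ_[p]) := by rw [this]
          _ = ((p ^ f - 1).choose n : ℚ_[p]) * ((p : ℚ_[p]) ^ f - 1 - n) := by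
              push_cast [hcast]; ring
      have hn1 : ((n : ℚ_[p]) + 1) ≠ 0 := by
        have : ((n + 1 : ℕ) : ℚ_[p]) ≠ 0 := Nat.cast_ne_zero.2 (Nat.succ_ne_zero n)
        push_cast at this; exact this
      have hrew : ((p ^ f - 1).choose (n + 1) : ℚ_[p]) - (-1 : ℚ_[p]) ^ (n + 1) =
          (((p ^ f - 1).choose n : ℚ_[p]) - (-1 : ℚ_[p]) ^ n) *
            ((p : ℚ_[p]) ^ f / (n + 1) - 1)
          + (-1 : ℚ_[p]) ^ n * ((p : ℚ_[p]) ^ f / (n + 1)) := by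
        have h2 : ((p ^ f - 1).choose (n + 1) : ℚ_[p]) =
            ((p ^ f - 1).choose n : ℚ_[p]) * ((p : ℚ_[p]) ^ f - 1 - n) / (n + 1) := by
          rw [eq_div_iff hn1]
          exact hid
        rw [h2]
        field_simp
        ring
      set δ : ℝ := (p : ℝ) ^ (-((f : ℤ) - e + 1)) with hδ
      have hδ1 : δ ≤ 1 := by
        rw [hδ]
        apply zpow_le_one_of_nonpos₀ (by exact_mod_cast hp.out.one_lt.le)
        omega
      have hqd : ‖(p : ℚ_[p]) ^ f / ((n : ℚ_[p]) + 1)‖ ≤ δ := by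
        have := aux_qdiv p e f he hef (n + 1) (Nat.succ_pos n) hlt
        push_cast at this
        exact this
      rw [hrew]
      refine le_trans (Padic.nonarchimedean _ _) (max_le ?_ ?_)
      · rw [norm_mul]
        have h1 : ‖(p : ℚ_[p]) ^ f / ((n : ℚ_[p]) + 1) - 1‖ ≤ 1 := by
          rw [sub_eq_add_neg]
          refine le_trans (Padic.nonarchimedean _ _) (max_le ?_ ?_)
          · exact le_trans hqd hδ1
          · simp
        calc ‖((p ^ f - 1).choose n : ℚ_[p]) - (-1 : ℚ_[p]) ^ n‖ *
              ‖(p : ℚ_[p]) ^ f / ((n : ℚ_[p]) + 1) - 1‖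
            ≤ δ * 1 := mul_le_mul hn h1 (norm_nonneg _) (by rw [hδ]; positivity)
          _ = δ := mul_one δ
      · rw [norm_mul]
        have : ‖(-1 : ℚ_[p]) ^ n‖ = 1 := by simp
        rw [this, one_mul]
        exact hqd

set_option maxHeartbeats 1000000 in
theorem stmt_8 (p : ℕ) [Fact p.Prime] (e f : ℕ) (he : 0 < e) (hef : e ≤ f)
    (k : ℕ) (hk : 0 < k) (hk' : k < p ^ e) :
    ‖(((p ^ f).choose k : ℚ_[p]) - (-1) ^ (k - 1) * (p : ℚ_[p]) ^ f / (k : ℚ_[p]))‖ ≤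
      (p : ℝ) ^ (-(2 * (f : ℤ) - 2 * e + 2)) := by
  have hp := (Fact.out : p.Prime)
  have hq1 : 1 ≤ p ^ f := Nat.one_le_pow _ _ hp.pos
  have hk0 : ((k : ℚ_[p])) ≠ 0 := by exact_mod_cast hk.ne'
  -- identity: q.choose k * k = q * (q-1).choose (k-1)
  have hid : ((p ^ f).choose k : ℚ_[p]) =
      (p : ℚ_[p]) ^ f * ((p ^ f - 1).choose (k - 1) : ℚ_[p]) / k := by
    have h := Nat.add_one_mul_choose_eq (p ^ f - 1) (k - 1)
    have h1 : p ^ f - 1 + 1 = p ^ f := by omega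
    have h2 : k - 1 + 1 = k := by omega
    rw [h1, h2] at h
    rw [eq_div_iff hk0]
    calc ((p ^ f).choose k : ℚ_[p]) * k = (((p ^ f).choose k * k : ℕ) : ℚ_[p]) := by push_cast; ring
      _ = (((p ^ f - 1) + 1) * (p ^ f - 1).choose (k - 1) : ℕ) := by rw [h1, ← h]
      _ = (p : ℚ_[p]) ^ f * ((p ^ f - 1).choose (k - 1) : ℚ_[p]) := by
          rw [h1]; push_cast; ring
  have hrew : ((p ^ f).choose k : ℚ_[p]) - (-1) ^ (k - 1) * (p : ℚ_[p]) ^ f / (k : ℚ_[p]) =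
      ((p : ℚ_[p]) ^ f / k) * (((p ^ f - 1).choose (k - 1) : ℚ_[p]) - (-1 : ℚ_[p]) ^ (k - 1)) := by
    rw [hid]; field_simp
  rw [hrew, norm_mul]
  have h1 := aux_qdiv p e f he hef k hk hk'
  have h2 := aux_choose p e f he hef (k - 1) (by omega)
  calc ‖(p : ℚ_[p]) ^ f / (k : ℚ_[p])‖ *
        ‖((p ^ f - 1).choose (k - 1) : ℚ_[p]) - (-1 : ℚ_[p]) ^ (k - 1)‖
      ≤ (p : ℝ) ^ (-((f : ℤ) - e + 1)) * (p : ℝ) ^ (-((f : ℤ) - e + 1)) :=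
        mul_le_mul h1 h2 (norm_nonneg _) (by positivity)
    _ = (p : ℝ) ^ (-(2 * (f : ℤ) - 2 * e + 2)) := by
        rw [← zpow_add₀ (by exact_mod_cast hp.pos.ne' : (p : ℝ) ≠ 0)]
        ring_nf
end

section
/- Let p be an odd prime and let p^e < p^f = q be powers of p with e < f. Then for every integer k with 0 < k < p^e + p^{e-1}, we have C(q,k) ≡ (-1)^{k-1}·q/k (mod p^{2f-2e+2}) in the p-adic integers. -/
open Finset

private lemma norm_natCast_eq' {p : ℕ} [hp : Fact p.Prime] (j : ℕ) (hj : j ≠ 0) :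
    ‖(j : ℚ_[p])‖ = (p : ℝ) ^ (-(padicValNat p j : ℤ)) := by
  rw [Padic.norm_eq_zpow_neg_valuation (by exact_mod_cast hj), Padic.valuation_natCast]

theorem stmt_9 (p : ℕ) [Fact p.Prime] (hodd : Odd p) (e f : ℕ) (he : 0 < e) (hef : e < f)
    (k : ℕ) (hk : 0 < k) (hk' : k < p ^ e + p ^ (e - 1)) :
    ‖(((p ^ f).choose k : ℚ_[p]) - (-1) ^ (k - 1) * (p : ℚ_[p]) ^ f / (k : ℚ_[p]))‖ ≤
      (p : ℝ) ^ (-(2 * (f : ℤ) - 2 * e + 2)) := by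
  have hp := (Fact.out : p.Prime)
  have hp2 : 2 ≤ p := hp.two_le
  have hp3 : 3 ≤ p := by
    rcases Nat.lt_or_ge p 3 with h | h
    · interval_cases p
      exact absurd hodd (by decide)
    · exact h
  have hpR1 : (1 : ℝ) < p := by exact_mod_cast hp.one_lt
  have hpR0 : (0 : ℝ) < p := by positivity
  have hpRne : (p : ℝ) ≠ 0 := ne_of_gt hpR0
  have hzmono : ∀ a b : ℤ, a ≤ b → (p : ℝ) ^ a ≤ (p : ℝ) ^ b := fun a b h =>
    zpow_le_zpow_right₀ hpR1.le h
  set q : ℕ := p ^ f with hq_def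
  set K : ℕ := k - 1 with hK_def
  have hKk : K + 1 = k := Nat.succ_pred_eq_of_pos hk
  have hpe1 : p ^ (e - 1) < p ^ e := Nat.pow_lt_pow_right hp.one_lt (by omega)
  have hbound : p ^ e + p ^ (e - 1) ≤ p ^ (e + 1) := by
    have h1 : p ^ (e + 1) = p * p ^ e := by ring
    have h2 : 2 * p ^ e ≤ p * p ^ e := Nat.mul_le_mul_right _ hp2
    omega
  have hkq : k ≤ q := by
    have : p ^ (e + 1) ≤ p ^ f := Nat.pow_le_pow_right hp.pos (by omega)
    omega
  have hq0 : 0 < q := Nat.pow_pos hp.pos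
  have hkQp : ((k : ℚ_[p])) ≠ 0 := Nat.cast_ne_zero.mpr hk.ne'
  -- valuation bounds for naturals below p^e + p^(e-1)
  have hval_le_e : ∀ j : ℕ, 0 < j → j < p ^ e + p ^ (e - 1) → padicValNat p j ≤ e := by
    intro j hj0 hjb
    by_contra hcon
    have hle : e + 1 ≤ padicValNat p j := by omega
    have hdvd : p ^ (e + 1) ∣ j := (padicValNat_dvd_iff_le hj0.ne').mpr hle
    have := Nat.le_of_dvd hj0 hdvd
    omega
  have heq_pe : ∀ j : ℕ, 0 < j → j < p ^ e + p ^ (e - 1) → p ^ e ∣ j → j = p ^ e := by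
    intro j hj0 hjb hdvd
    rcases hdvd with ⟨m, rfl⟩
    have hm0 : m ≠ 0 := by rintro rfl; simp at hj0
    have hm1 : m < 2 := by
      by_contra hcon
      have h2m : p ^ e * 2 ≤ p ^ e * m := Nat.mul_le_mul_left _ (by omega)
      omega
    have hm : m = 1 := by omega
    simp [hm]
  have hval_lt_e : ∀ j : ℕ, 0 < j → j < p ^ e + p ^ (e - 1) → j ≠ p ^ e →
      padicValNat p j < e := by
    intro j hj0 hjb hjne
    by_contra hcon
    have hdvd : p ^ e ∣ j := (padicValNat_dvd_iff_le hj0.ne').mpr (by omega)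
    exact hjne (heq_pe j hj0 hjb hdvd)
  set v : ℕ := padicValNat p k with hv_def
  have hv_le : v ≤ e := hval_le_e k hk hk'
  -- the terms
  set x : ℕ → ℚ_[p] := fun i => -((p : ℚ_[p]) ^ f / ((i + 1 : ℕ) : ℚ_[p])) with hx_def
  have hxnorm : ∀ i : ℕ, ‖x i‖ = (p : ℝ) ^ ((padicValNat p (i + 1) : ℤ) - f) := by
    intro i
    rw [hx_def]
    simp only [norm_neg, norm_div, Padic.norm_p_pow,
      norm_natCast_eq' (i + 1) (Nat.succ_ne_zero i)]
    rw [← zpow_sub₀ hpRne]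
    ring_nf
  have hival : ∀ i : ℕ, i ∈ range K → padicValNat p (i + 1) ≤ e := by
    intro i hi
    have : i + 1 < p ^ e + p ^ (e - 1) := by
      have := mem_range.mp hi
      omega
    exact hval_le_e (i + 1) (Nat.succ_pos i) this
  have hxle1 : ∀ i : ℕ, i ∈ range K → ‖x i‖ ≤ 1 := by
    intro i hi
    rw [hxnorm i]
    have := hival i hi
    calc (p : ℝ) ^ ((padicValNat p (i + 1) : ℤ) - f) ≤ (p : ℝ) ^ (0 : ℤ) :=
          hzmono _ _ (by omega)
      _ = 1 := zpow_zero _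
  -- main algebraic identity
  have hqc : ((q : ℕ) : ℚ_[p]) = (p : ℚ_[p]) ^ f := by rw [hq_def]; push_cast; ring
  have key : ((q.choose k : ℕ) : ℚ_[p]) =
      (q : ℚ_[p]) / (k : ℚ_[p]) * ((-1) ^ K * ∏ i ∈ range K, (1 + x i)) := by
    have h := Nat.add_one_mul_choose_eq (q - 1) K
    rw [show q - 1 + 1 = q by omega, show K + 1 = k by omega] at h
    -- h : q * (q-1).choose K = q.choose k * k
    have st1 : ((q.choose k : ℕ) : ℚ_[p]) =
        (q : ℚ_[p]) / (k : ℚ_[p]) * (((q - 1).choose K : ℕ) : ℚ_[p]) := by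
      rw [div_mul_eq_mul_div, eq_div_iff hkQp]
      exact_mod_cast h.symm
    have hprod_denom : ∏ i ∈ range K, ((i + 1 : ℕ) : ℚ_[p]) = ((K.factorial : ℕ) : ℚ_[p]) := by
      rw [← Nat.cast_prod, Finset.prod_range_add_one_eq_factorial]
    have hfac_ne : ((K.factorial : ℕ) : ℚ_[p]) ≠ 0 := Nat.cast_ne_zero.2 (Nat.factorial_ne_zero K)
    have desc : (((q - 1).descFactorial K : ℕ) : ℚ_[p]) =
        ∏ i ∈ range K, ((q : ℚ_[p]) - ((i + 1 : ℕ) : ℚ_[p])) := by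
      rw [Nat.descFactorial_eq_prod_range, Nat.cast_prod]
      apply Finset.prod_congr rfl
      intro i hi
      have hi' : i < K := mem_range.mp hi
      rw [Nat.cast_sub (by omega : i ≤ q - 1), Nat.cast_sub (by omega : 1 ≤ q)]
      push_cast
      ring
    have st2 : (((q - 1).choose K : ℕ) : ℚ_[p]) * ((K.factorial : ℕ) : ℚ_[p]) =
        ∏ i ∈ range K, ((q : ℚ_[p]) - ((i + 1 : ℕ) : ℚ_[p])) := by
      rw [← desc, Nat.descFactorial_eq_factorial_mul_choose]
      push_cast
      ring
    have st3 : ∏ i ∈ range K, (((q : ℚ_[p]) - ((i + 1 : ℕ) : ℚ_[p])) / ((i + 1 : ℕ) : ℚ_[p]))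
        = (((q - 1).choose K : ℕ) : ℚ_[p]) := by
      rw [prod_div_distrib, hprod_denom, ← st2, mul_div_assoc, div_self hfac_ne, mul_one]
    have st4 : ∀ i ∈ range K,
        ((q : ℚ_[p]) - ((i + 1 : ℕ) : ℚ_[p])) / ((i + 1 : ℕ) : ℚ_[p]) = -(1 + x i) := by
      intro i _
      have hne : ((i + 1 : ℕ) : ℚ_[p]) ≠ 0 := Nat.cast_ne_zero.2 (Nat.succ_ne_zero i)
      have hr : -(1 + x i) = (q : ℚ_[p]) / ((i + 1 : ℕ) : ℚ_[p]) - 1 := by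
        rw [hx_def]
        simp only [← hqc]
        ring
      rw [hr, div_sub_one hne]
    rw [st1, ← st3, Finset.prod_congr rfl st4]
    congr 1
    calc ∏ i ∈ range K, -(1 + x i) = ∏ i ∈ range K, ((-1) * (1 + x i)) := by
          apply Finset.prod_congr rfl; intro i _; ring
      _ = (-1) ^ K * ∏ i ∈ range K, (1 + x i) := by
          rw [prod_mul_distrib, prod_const, card_range]
  -- the difference
  set E : ℚ_[p] := (∏ i ∈ range K, (1 + x i)) - 1 with hE_def
  have hdiff : ((q.choose k : ℕ) : ℚ_[p]) - (-1) ^ K * (p : ℚ_[p]) ^ f / (k : ℚ_[p]) =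
      (-1) ^ K * ((q : ℚ_[p]) / (k : ℚ_[p])) * E := by
    rw [key, hE_def]
    have : ((q : ℕ) : ℚ_[p]) = (p : ℚ_[p]) ^ f := by
      rw [hq_def]; push_cast; ring
    rw [this]
    ring
  -- decomposition of E
  set S1 : ℚ_[p] := ∑ i ∈ range K, x i with hS1_def
  set S2 : ℚ_[p] := ∑ t ∈ (range K).powerset.filter (fun t => 2 ≤ t.card),
      ∏ i ∈ t, x i with hS2_def
  have hE : E = S1 + S2 := by
    have hprod_add : ∏ i ∈ range K, (1 + x i) = ∑ t ∈ (range K).powerset, ∏ i ∈ t, x i := by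
      have h := Finset.prod_add x (fun _ => (1 : ℚ_[p])) (range K)
      simp only [prod_const_one, mul_one] at h
      rw [← h]
      apply Finset.prod_congr rfl
      intro i _
      ring
    have hnotfilter : (range K).powerset.filter (fun t => ¬ t.card ≤ 1)
        = (range K).powerset.filter (fun t => 2 ≤ t.card) := by
      apply filter_congr
      intro t _
      simp only [not_le, eq_iff_iff]
      omega
    have hA : (range K).powerset.filter (fun t => t.card ≤ 1)
        = insert ∅ ((range K).image fun i => ({i} : Finset ℕ)) := by
      ext t
      simp only [mem_filter, mem_powerset, mem_insert, mem_image]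
      constructor
      · rintro ⟨hsub, hcard⟩
        rcases Nat.le_one_iff_eq_zero_or_eq_one.mp hcard with h0 | h1
        · exact Or.inl (card_eq_zero.mp h0)
        · obtain ⟨a, rfl⟩ := card_eq_one.mp h1
          exact Or.inr ⟨a, by simpa using hsub, rfl⟩
      · rintro (rfl | ⟨a, ha, rfl⟩)
        · simp
        · exact ⟨by simpa using ha, by simp⟩
    have hfirst : ∑ t ∈ (range K).powerset.filter (fun t => t.card ≤ 1), ∏ i ∈ t, x i
        = 1 + S1 := by
      rw [hA, sum_insert (by simp), sum_image (fun a _ b _ h => singleton_injective h)]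
      simp [hS1_def]
    have hsplit := Finset.sum_filter_add_sum_filter_not ((range K).powerset)
      (fun t => t.card ≤ 1) (fun t => ∏ i ∈ t, x i)
    rw [hE_def, hprod_add, ← hsplit, hfirst, hnotfilter, ← hS2_def]
    ring
  -- norm bound for S2
  have hS2bound : ‖S2‖ ≤ (p : ℝ) ^ (-((f : ℤ) - 2 * e + 2 + v)) := by
    rw [hS2_def]
    apply IsUltrametricDist.norm_sum_le_of_forall_le_of_nonneg (by positivity)
    intro t ht
    obtain ⟨hsub, hcard⟩ : t ⊆ range K ∧ 2 ≤ t.card := by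
      simpa [mem_filter, mem_powerset] using ht
    obtain ⟨a, ha, b, hb, hab⟩ := Finset.one_lt_card.mp (show 1 < t.card by omega)
    obtain ⟨c, d, hc, hd, hcd, hdne⟩ :
        ∃ c d, c ∈ t ∧ d ∈ t ∧ c ≠ d ∧ d + 1 ≠ p ^ e := by
      by_cases hbp : b + 1 = p ^ e
      · exact ⟨b, a, hb, ha, fun h => hab h.symm, fun h => hab (by omega)⟩
      · exact ⟨a, b, ha, hb, hab, hbp⟩
    have hpair : ({c, d} : Finset ℕ) ⊆ t := by
      intro z hz
      simp only [mem_insert, mem_singleton] at hz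
      rcases hz with rfl | rfl <;> assumption
    rw [← prod_sdiff hpair, norm_mul, prod_pair hcd, norm_mul]
    have h1 : ‖∏ i ∈ t \ {c, d}, x i‖ ≤ 1 := by
      rw [norm_prod]
      apply Finset.prod_le_one (fun i _ => norm_nonneg _)
      intro i hi
      exact hxle1 i (hsub (mem_sdiff.mp hi).1)
    have hcK : c ∈ range K := hsub hc
    have hdK : d ∈ range K := hsub hd
    have hxc : ‖x c‖ ≤ (p : ℝ) ^ ((e : ℤ) - f) := by
      rw [hxnorm]
      have := hival c hcK
      exact hzmono _ _ (by omega)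
    have hxd : ‖x d‖ ≤ (p : ℝ) ^ ((e : ℤ) - 1 - f) := by
      rw [hxnorm]
      have hdv : padicValNat p (d + 1) < e :=
        hval_lt_e (d + 1) (Nat.succ_pos d) (by have := mem_range.mp hdK; omega) hdne
      exact hzmono _ _ (by omega)
    calc ‖∏ i ∈ t \ {c, d}, x i‖ * (‖x c‖ * ‖x d‖)
        ≤ 1 * ((p : ℝ) ^ ((e : ℤ) - f) * (p : ℝ) ^ ((e : ℤ) - 1 - f)) := by
          apply mul_le_mul h1 (mul_le_mul hxc hxd (norm_nonneg _) (by positivity))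
            (by positivity) zero_le_one
      _ = (p : ℝ) ^ ((e : ℤ) - f + ((e : ℤ) - 1 - f)) := by
          rw [one_mul, ← zpow_add₀ hpRne]
      _ ≤ (p : ℝ) ^ (-((f : ℤ) - 2 * e + 2 + v)) := by
          apply hzmono
          have h1 : v ≤ e := hv_le
          omega
  -- norm bound for S1
  have hS1bound : ‖S1‖ ≤ (p : ℝ) ^ (-((f : ℤ) - 2 * e + 2 + v)) := by
    by_cases hkpe : k = p ^ e
    · -- k = p^e : pairing argument
      have hveq : v = e := by rw [hv_def, hkpe, padicValNat.prime_pow]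
      set H : ℚ_[p] := ∑ i ∈ range K, (((i + 1 : ℕ) : ℚ_[p]))⁻¹ with hH_def
      have hS1H : S1 = -((p : ℚ_[p]) ^ f) * H := by
        rw [hS1_def, hH_def, Finset.mul_sum]
        apply Finset.sum_congr rfl
        intro i _
        rw [hx_def]
        simp [div_eq_mul_inv]
      have hHbound : ‖H‖ ≤ (p : ℝ) ^ ((e : ℤ) - 2) := by
        have hrefl : H = ∑ i ∈ range K, (((K - 1 - i + 1 : ℕ) : ℚ_[p]))⁻¹ := by
          rw [hH_def]
          exact (Finset.sum_range_reflect (fun j => (((j + 1 : ℕ) : ℚ_[p]))⁻¹) K).symm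
        have h2H : (2 : ℚ_[p]) * H
            = ∑ i ∈ range K, ((((i + 1 : ℕ) : ℚ_[p]))⁻¹ + (((K - i : ℕ) : ℚ_[p]))⁻¹) := by
          rw [two_mul]
          nth_rewrite 2 [hrefl]
          rw [hH_def, ← sum_add_distrib]
          apply Finset.sum_congr rfl
          intro i hi
          have hKi : K - 1 - i + 1 = K - i := by have := mem_range.mp hi; omega
          rw [hKi]
        have h2norm : ‖(2 : ℚ_[p])‖ = 1 := by
          have h2c : ((2 : ℕ) : ℚ_[p]) = (2 : ℚ_[p]) := by norm_num
          have hnd2 : ¬ p ∣ 2 := fun h => by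
            have := Nat.le_of_dvd (by norm_num) h
            omega
          rw [← h2c, norm_natCast_eq' 2 (by norm_num), padicValNat.eq_zero_of_not_dvd hnd2]
          simp
        have hH2 : ‖H‖ = ‖(2 : ℚ_[p]) * H‖ := by rw [norm_mul, h2norm, one_mul]
        rw [hH2, h2H]
        apply IsUltrametricDist.norm_sum_le_of_forall_le_of_nonneg (by positivity)
        intro i hi
        have hiK := mem_range.mp hi
        have hKpe : K + 1 = p ^ e := by rw [hKk, hkpe]
        have ha0 : 0 < i + 1 := Nat.succ_pos i
        have hb0 : 0 < K - i := by omega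
        have hab : (i + 1) + (K - i) = p ^ e := by omega
        have haQ : (((i + 1 : ℕ)) : ℚ_[p]) ≠ 0 := Nat.cast_ne_zero.2 ha0.ne'
        have hbQ : (((K - i : ℕ)) : ℚ_[p]) ≠ 0 := Nat.cast_ne_zero.2 hb0.ne'
        have hterm : (((i + 1 : ℕ) : ℚ_[p]))⁻¹ + (((K - i : ℕ) : ℚ_[p]))⁻¹
            = (((p ^ e : ℕ) : ℚ_[p])) / (((i + 1 : ℕ) : ℚ_[p]) * ((K - i : ℕ) : ℚ_[p])) := by
          rw [inv_add_inv haQ hbQ, ← hab]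
          push_cast
          ring
        rw [hterm, norm_div, norm_mul, norm_natCast_eq' (p ^ e) (by positivity),
          norm_natCast_eq' (i + 1) ha0.ne', norm_natCast_eq' (K - i) hb0.ne',
          padicValNat.prime_pow]
        have hwa : padicValNat p (i + 1) < e :=
          hval_lt_e (i + 1) ha0 (by omega) (by omega)
        have hwb : padicValNat p (K - i) < e :=
          hval_lt_e (K - i) hb0 (by omega) (by omega)
        rw [← zpow_add₀ hpRne, ← zpow_sub₀ hpRne]
        apply hzmono
        omega
      rw [hS1H, norm_mul, norm_neg, Padic.norm_p_pow]
      calc (p : ℝ) ^ (-(f : ℤ)) * ‖H‖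
          ≤ (p : ℝ) ^ (-(f : ℤ)) * (p : ℝ) ^ ((e : ℤ) - 2) :=
            mul_le_mul_of_nonneg_left hHbound (by positivity)
        _ = (p : ℝ) ^ (-((f : ℤ) - 2 * e + 2 + v)) := by
            rw [← zpow_add₀ hpRne, hveq]
            ring_nf
    · -- k ≠ p^e : termwise bound
      rw [hS1_def]
      apply IsUltrametricDist.norm_sum_le_of_forall_le_of_nonneg (by positivity)
      intro i hi
      rw [hxnorm]
      apply hzmono
      have hvk : v < e := hval_lt_e k hk hk' hkpe
      have hiw : padicValNat p (i + 1) ≤ e := hival i hi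
      by_cases hip : p ^ e ∣ (i + 1)
      · have hie : i + 1 = p ^ e :=
          heq_pe (i + 1) (Nat.succ_pos i) (by have := mem_range.mp hi; omega) hip
        have hpek : p ^ e < k := by have := mem_range.mp hi; omega
        have h2e : 2 ≤ e := by
          by_contra hcon
          have he1 : e = 1 := by omega
          rw [he1] at hpek hk'
          simp [pow_one] at hpek hk'
          omega
        have hnd : ¬ p ^ (e - 1) ∣ k := by
          rintro ⟨m, hm⟩
          have hpe : p ^ (e - 1) * p = p ^ e := by
            rw [← pow_succ]
            congr 1
            omega
          have hpe2 : p ^ (e - 1) * (p + 1) = p ^ e + p ^ (e - 1) := by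
            rw [Nat.mul_add, hpe, mul_one]
          have h1 : p ^ (e - 1) * p < p ^ (e - 1) * m := by omega
          have h2 : p ^ (e - 1) * m < p ^ (e - 1) * (p + 1) := by omega
          have hm1 : p < m := Nat.lt_of_mul_lt_mul_left h1
          have hm2 : m < p + 1 := Nat.lt_of_mul_lt_mul_left h2
          omega
        have hvk2 : v < e - 1 := by
          by_contra hcon
          exact hnd ((padicValNat_dvd_iff_le hk.ne').mpr (show e - 1 ≤ padicValNat p k by omega))
        omega
      · have hiw' : padicValNat p (i + 1) < e := by
          by_contra hcon
          exact hip ((padicValNat_dvd_iff_le (Nat.succ_ne_zero i)).mpr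
            (show e ≤ padicValNat p (i + 1) by omega))
        omega
  -- assemble
  have hEbound : ‖E‖ ≤ (p : ℝ) ^ (-((f : ℤ) - 2 * e + 2 + v)) := by
    rw [hE]
    exact le_trans (Padic.nonarchimedean _ _) (max_le hS1bound hS2bound)
  have hqk : ‖(q : ℚ_[p]) / (k : ℚ_[p])‖ = (p : ℝ) ^ ((v : ℤ) - f) := by
    rw [norm_div, norm_natCast_eq' q (by omega), norm_natCast_eq' k hk.ne']
    rw [hq_def, padicValNat.prime_pow, ← hv_def, ← zpow_sub₀ hpRne]
    ring_nf
  rw [hdiff]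
  rw [norm_mul, norm_mul]
  have hne1 : ‖((-1 : ℚ_[p])) ^ K‖ = 1 := by
    rw [norm_pow, norm_neg, norm_one, one_pow]
  rw [hne1, one_mul, hqk]
  calc (p : ℝ) ^ ((v : ℤ) - f) * ‖E‖
      ≤ (p : ℝ) ^ ((v : ℤ) - f) * (p : ℝ) ^ (-((f : ℤ) - 2 * e + 2 + v)) :=
        mul_le_mul_of_nonneg_left hEbound (by positivity)
    _ = (p : ℝ) ^ (-(2 * (f : ℤ) - 2 * e + 2)) := by
        rw [← zpow_add₀ hpRne]
        ring_nf
end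

section
/- Let q = 2^f and 2^e ≤ q be powers of 2 with e ≤ f. Then for every integer k with 0 < k < 2^e, we have C(q,k) ≡ (-1)^{k-1}·q/k (mod 2^{2f-2e+3}) in the 2-adic integers. -/
open Finset

-- valuation bound
lemma aux_val_lt {e n : ℕ} (hn : 0 < n) (h : n < 2 ^ e) : padicValNat 2 n < e := by
  by_contra hc
  rw [not_lt] at hc
  have h1 : (2:ℕ) ^ e ∣ n := dvd_trans (pow_dvd_pow 2 hc) pow_padicValNat_dvd
  exact absurd (Nat.le_of_dvd hn h1) (not_le.mpr h)

lemma aux_norm_natCast {n : ℕ} (hn : 0 < n) :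
    ‖((n : ℚ_[2]))⁻¹‖ = (2:ℝ) ^ ((padicValNat 2 n : ℤ)) := by
  rw [norm_inv, Padic.norm_eq_zpow_neg_valuation (by exact_mod_cast hn.ne' : (n:ℚ_[2]) ≠ 0),
    Padic.valuation_natCast]
  push_cast
  rw [← zpow_neg, neg_neg]

lemma aux_norm_inv_le {e n : ℕ} (hn : 0 < n) (h : n < 2 ^ e) :
    ‖((n : ℚ_[2]))⁻¹‖ ≤ (2:ℝ) ^ ((e:ℤ) - 1) := by
  rw [aux_norm_natCast hn]
  apply zpow_le_zpow_right₀ one_le_two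
  have := aux_val_lt hn h
  omega

lemma aux_eq_pow {e n : ℕ} (hn : 0 < n) (h : n < 2 ^ e) (hv : e - 1 ≤ padicValNat 2 n) :
    n = 2 ^ (e - 1) := by
  have he : 1 ≤ e := by
    have := aux_val_lt hn h
    omega
  have hd : (2:ℕ) ^ (e - 1) ∣ n := dvd_trans (pow_dvd_pow 2 hv) pow_padicValNat_dvd
  obtain ⟨m, rfl⟩ := hd
  have hp : (2:ℕ) ^ (e-1) * 2 = 2 ^ e := by
    rw [← pow_succ, Nat.sub_add_cancel he]
  have hm1 : 0 < m := Nat.pos_of_ne_zero (by rintro rfl; simp at hn)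
  have hm2 : m < 2 := by
    by_contra hm
    rw [not_lt] at hm
    have := Nat.mul_le_mul_left (2 ^ (e-1)) hm
    omega
  have : m = 1 := by omega
  simp [this]

lemma aux_pair {e a b : ℕ} (ha : 0 < a) (hab : a < b) (hb : b < 2 ^ e) :
    ‖((a : ℚ_[2]))⁻¹ * ((b : ℚ_[2]))⁻¹‖ ≤ (2:ℝ) ^ (2 * (e:ℤ) - 3) := by
  have hb0 : 0 < b := lt_trans ha hab
  have hva := aux_val_lt ha (lt_trans hab hb)
  have hvb := aux_val_lt hb0 hb
  have he : 2 ≤ e := by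
    have h2 : 2 ≤ b := by omega
    rcases Nat.lt_or_ge e 2 with h | h
    · interval_cases e <;> omega
    · exact h
  have key : padicValNat 2 a + padicValNat 2 b ≤ 2 * e - 3 := by
    by_contra hc
    rw [not_le] at hc
    have hva2 : e - 1 ≤ padicValNat 2 a := by omega
    have hvb2 : e - 1 ≤ padicValNat 2 b := by omega
    have h1 := aux_eq_pow ha (lt_trans hab hb) hva2
    have h2 := aux_eq_pow hb0 hb hvb2
    rw [h1, h2] at hab
    exact lt_irrefl _ hab
  rw [norm_mul, aux_norm_natCast ha, aux_norm_natCast hb0, ← zpow_add₀ (by norm_num : (2:ℝ) ≠ 0)]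
  apply zpow_le_zpow_right₀ one_le_two
  omega

lemma aux_norm_sum_le {ι : Type*} (s : Finset ι) (g : ι → ℚ_[2]) (C : ℝ) (hC : 0 ≤ C)
    (h : ∀ i ∈ s, ‖g i‖ ≤ C) : ‖∑ i ∈ s, g i‖ ≤ C := by
  classical
  induction s using Finset.induction_on with
  | empty => simpa using hC
  | insert _ _ hx ih =>
    rename_i a t
    rw [Finset.sum_insert hx]
    refine le_trans (Padic.nonarchimedean _ _) (max_le ?_ ?_)
    · exact h a (Finset.mem_insert_self a t)
    · exact ih fun i hi => h i (Finset.mem_insert_of_mem hi)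

lemma aux_identity (f : ℕ) : ∀ m : ℕ, m + 1 ≤ 2 ^ f →
    (((2 ^ f).choose (m + 1) : ℚ_[2])) =
      (2 : ℚ_[2]) ^ f * ((m : ℚ_[2]) + 1)⁻¹ * (-1) ^ m *
        ∏ i ∈ Finset.range m, (1 - (2 : ℚ_[2]) ^ f * ((i : ℚ_[2]) + 1)⁻¹) := by
  intro m
  induction m with
  | zero => simp [Nat.choose_one_right]
  | succ n ih =>
    intro hm
    have hn : n + 1 ≤ 2 ^ f := by omega
    have hrec : ((2 ^ f).choose (n + 2) : ℚ_[2]) * ((n : ℚ_[2]) + 2) =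
        ((2 ^ f).choose (n + 1) : ℚ_[2]) * ((2 : ℚ_[2]) ^ f - ((n : ℚ_[2]) + 1)) := by
      have h := Nat.choose_succ_right_eq (2 ^ f) (n + 1)
      have hcast : ((2 ^ f - (n + 1) : ℕ) : ℚ_[2]) = (2 : ℚ_[2]) ^ f - ((n : ℚ_[2]) + 1) := by
        push_cast [Nat.cast_sub hn]
        ring
      calc ((2 ^ f).choose (n + 2) : ℚ_[2]) * ((n : ℚ_[2]) + 2)
          = (((2 ^ f).choose (n + 2) * (n + 2) : ℕ) : ℚ_[2]) := by push_cast; ring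
        _ = (((2 ^ f).choose (n + 1) * (2 ^ f - (n + 1)) : ℕ) : ℚ_[2]) := by rw [h]
        _ = ((2 ^ f).choose (n + 1) : ℚ_[2]) * ((2 : ℚ_[2]) ^ f - ((n : ℚ_[2]) + 1)) := by
            push_cast [Nat.cast_sub hn]; ring
    have hn2 : ((n : ℚ_[2]) + 2) ≠ 0 := by
      have : ((n + 2 : ℕ) : ℚ_[2]) ≠ 0 := Nat.cast_ne_zero.mpr (by omega)
      push_cast at this; exact this
    have hn1 : ((n : ℚ_[2]) + 1) ≠ 0 := by
      have : ((n + 1 : ℕ) : ℚ_[2]) ≠ 0 := Nat.cast_ne_zero.mpr (by omega)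
      push_cast at this; exact this
    rw [Finset.prod_range_succ]
    have hch : ((2 ^ f).choose (n + 2) : ℚ_[2]) =
        ((2 ^ f).choose (n + 1) : ℚ_[2]) * ((2 : ℚ_[2]) ^ f - ((n : ℚ_[2]) + 1)) *
          ((n : ℚ_[2]) + 2)⁻¹ := by
      field_simp
      linear_combination hrec
    rw [hch, ih hn]
    push_cast
    have hn2' : ((n : ℚ_[2]) + 1 + 1) ≠ 0 := by
      rw [show ((n:ℚ_[2]) + 1 + 1) = (n:ℚ_[2]) + 2 by ring]; exact hn2
    field_simp
    ring

lemma aux_norm_two_pow (f : ℕ) : ‖(2:ℚ_[2])^f‖ = (2:ℝ) ^ (-(f:ℤ)) := by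
  rw [norm_pow]
  have h2 : ‖(2:ℚ_[2])‖ = (2:ℝ)⁻¹ := by
    have := @Padic.norm_p 2 ⟨Nat.prime_two⟩
    simpa using this
  rw [h2, inv_pow, ← zpow_natCast, ← zpow_neg]

lemma aux_zpow_mul (a b : ℤ) : (2:ℝ)^a * (2:ℝ)^b = 2^(a+b) :=
  (zpow_add₀ (by norm_num) a b).symm

lemma aux_zpow_le {a b : ℤ} (h : a ≤ b) : (2:ℝ)^a ≤ (2:ℝ)^b :=
  zpow_le_zpow_right₀ one_le_two h

lemma aux_prodE (e f : ℕ) (hef : e ≤ f) : ∀ m, m < 2 ^ e →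
    ‖(∏ i ∈ Finset.range m, (1 - (2:ℚ_[2])^f * ((i:ℚ_[2])+1)⁻¹)) -
      (1 - (2:ℚ_[2])^f * ∑ i ∈ Finset.range m, ((i:ℚ_[2])+1)⁻¹)‖ ≤
      (2:ℝ) ^ (-(2*(f:ℤ)) + 2*e - 2) := by
  intro m
  induction m with
  | zero => intro _; simp; positivity
  | succ n ih =>
    intro hm
    have hn : n < 2 ^ e := by omega
    set c : ℚ_[2] := (2:ℚ_[2])^f with hc
    set P : ℚ_[2] := ∏ i ∈ Finset.range n, (1 - c * ((i:ℚ_[2])+1)⁻¹) with hP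
    set S : ℚ_[2] := ∑ i ∈ Finset.range n, ((i:ℚ_[2])+1)⁻¹ with hS
    set u : ℚ_[2] := ((n:ℚ_[2])+1)⁻¹ with hu
    have hinv : ∀ j : ℕ, j + 1 < 2 ^ e → ‖((j:ℚ_[2])+1)⁻¹‖ ≤ (2:ℝ)^((e:ℤ)-1) := by
      intro j hj
      have : ((j:ℚ_[2])+1) = ((j+1 : ℕ) : ℚ_[2]) := by push_cast; ring
      rw [this]
      exact aux_norm_inv_le (by omega) hj
    have hnu : ‖u‖ ≤ (2:ℝ)^((e:ℤ)-1) := hinv n hm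
    have hnS : ‖S‖ ≤ (2:ℝ)^((e:ℤ)-1) := by
      apply aux_norm_sum_le _ _ _ (by positivity)
      intro i hi
      have : i < n := Finset.mem_range.mp hi
      exact hinv i (by omega)
    have hncu : ‖c * u‖ ≤ 1 := by
      rw [norm_mul, hc, aux_norm_two_pow]
      calc (2:ℝ)^(-(f:ℤ)) * ‖u‖ ≤ (2:ℝ)^(-(f:ℤ)) * (2:ℝ)^((e:ℤ)-1) := by
            apply mul_le_mul_of_nonneg_left hnu (by positivity)
        _ = (2:ℝ)^(-(f:ℤ) + ((e:ℤ)-1)) := aux_zpow_mul _ _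
        _ ≤ (2:ℝ)^(0:ℤ) := aux_zpow_le (by omega)
        _ = 1 := by norm_num
    have h1cu : ‖1 - c * u‖ ≤ 1 := by
      calc ‖1 - c * u‖ ≤ max ‖(1:ℚ_[2])‖ ‖-(c*u)‖ := by
            rw [sub_eq_add_neg]; exact Padic.nonarchimedean _ _
        _ ≤ 1 := by rw [norm_neg, norm_one]; exact max_le le_rfl hncu
    have key : (∏ i ∈ Finset.range (n+1), (1 - c * ((i:ℚ_[2])+1)⁻¹)) -
        (1 - c * ∑ i ∈ Finset.range (n+1), ((i:ℚ_[2])+1)⁻¹) =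
        (P - (1 - c * S)) * (1 - c * u) + c^2 * u * S := by
      rw [Finset.prod_range_succ, Finset.sum_range_succ, ← hP, ← hS, ← hu]
      ring
    rw [key]
    refine le_trans (Padic.nonarchimedean _ _) (max_le ?_ ?_)
    · calc ‖(P - (1 - c * S)) * (1 - c * u)‖ = ‖P - (1 - c*S)‖ * ‖1 - c*u‖ := norm_mul _ _
        _ ≤ (2:ℝ)^(-(2*(f:ℤ)) + 2*e - 2) * 1 := by
            apply mul_le_mul (ih hn) h1cu (norm_nonneg _) (by positivity)
        _ = _ := mul_one _
    · calc ‖c^2 * u * S‖ = ‖c‖^2 * ‖u‖ * ‖S‖ := by rw [norm_mul, norm_mul, norm_pow]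
        _ ≤ ((2:ℝ)^(-(f:ℤ)))^2 * (2:ℝ)^((e:ℤ)-1) * (2:ℝ)^((e:ℤ)-1) := by
            rw [hc, aux_norm_two_pow]
            gcongr
        _ = (2:ℝ)^(-(2*(f:ℤ)) + 2*e - 2) := by
            rw [sq, aux_zpow_mul, aux_zpow_mul, aux_zpow_mul]
            congr 1
            ring

theorem stmt_10 (e f : ℕ) (he : 0 < e) (hef : e ≤ f)
    (k : ℕ) (hk : 0 < k) (hk' : k < 2 ^ e) :
    ‖(((2 ^ f).choose k : ℚ_[2]) - (-1) ^ (k - 1) * (2 : ℚ_[2]) ^ f / (k : ℚ_[2]))‖ ≤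
      (2 : ℝ) ^ (-(2 * (f : ℤ) - 2 * e + 3)) := by
  rcases Nat.lt_or_ge k 2 with hk2 | hk2
  · -- k = 1
    have hk1 : k = 1 := by omega
    subst hk1
    simp [Nat.choose_one_right]
    positivity
  · -- k ≥ 2
    obtain ⟨m, rfl⟩ : ∃ m, k = m + 1 := ⟨k - 1, by omega⟩
    have hm1 : 1 ≤ m := by omega
    have hkf : m + 1 ≤ 2 ^ f :=
      le_trans (le_of_lt hk') (Nat.pow_le_pow_right (by norm_num) hef)
    have hid := aux_identity f m hkf
    set c : ℚ_[2] := (2:ℚ_[2])^f with hc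
    set P : ℚ_[2] := ∏ i ∈ Finset.range m, (1 - c * ((i:ℚ_[2])+1)⁻¹) with hP
    set S : ℚ_[2] := ∑ i ∈ Finset.range m, ((i:ℚ_[2])+1)⁻¹ with hS
    set E : ℚ_[2] := P - (1 - c * S) with hE
    have hmk : ((m:ℚ_[2]) + 1) = ((m + 1 : ℕ) : ℚ_[2]) := by push_cast; ring
    have hsub : m + 1 - 1 = m := rfl
    have hkey : (((2 ^ f).choose (m+1) : ℚ_[2]) - (-1) ^ (m + 1 - 1) * c / ((m+1 : ℕ) : ℚ_[2])) =
        (-1)^m * (c * (((m+1:ℕ) : ℚ_[2]))⁻¹ * E - c^2 * ((((m+1:ℕ):ℚ_[2]))⁻¹ * S)) := by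
      rw [hsub, hid, hmk, hE, div_eq_mul_inv]
      ring
    rw [hkey, norm_mul, norm_pow, norm_neg, norm_one, one_pow, one_mul, sub_eq_add_neg]
    have hEbound : ‖E‖ ≤ (2:ℝ) ^ (-(2*(f:ℤ)) + 2*e - 2) := aux_prodE e f hef m (by omega)
    have hkinv : ‖(((m+1:ℕ) : ℚ_[2]))⁻¹‖ ≤ (2:ℝ)^((e:ℤ)-1) := aux_norm_inv_le (by omega) hk'
    refine le_trans (Padic.nonarchimedean _ _) (max_le ?_ ?_)
    · calc ‖c * (((m+1:ℕ) : ℚ_[2]))⁻¹ * E‖ = ‖c‖ * ‖(((m+1:ℕ) : ℚ_[2]))⁻¹‖ * ‖E‖ := by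
            rw [norm_mul, norm_mul]
        _ ≤ (2:ℝ)^(-(f:ℤ)) * (2:ℝ)^((e:ℤ)-1) * (2:ℝ)^(-(2*(f:ℤ)) + 2*e - 2) := by
            rw [hc, aux_norm_two_pow]
            gcongr
        _ = (2:ℝ)^(-(f:ℤ) + ((e:ℤ)-1) + (-(2*(f:ℤ)) + 2*e - 2)) := by
            rw [aux_zpow_mul, aux_zpow_mul]
        _ ≤ (2:ℝ)^(-(2 * (f:ℤ) - 2 * e + 3)) := aux_zpow_le (by omega)
    · have hterm : ‖(((m+1:ℕ):ℚ_[2]))⁻¹ * S‖ ≤ (2:ℝ)^(2*(e:ℤ)-3) := by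
        rw [hS, Finset.mul_sum]
        apply aux_norm_sum_le _ _ _ (by positivity)
        intro i hi
        have hi' : i < m := Finset.mem_range.mp hi
        have hcast : ((i:ℚ_[2])+1) = ((i+1 : ℕ) : ℚ_[2]) := by push_cast; ring
        rw [hcast, mul_comm]
        exact aux_pair (by omega) (by omega) hk'
      calc ‖-(c^2 * ((((m+1:ℕ):ℚ_[2]))⁻¹ * S))‖ = ‖c‖^2 * ‖(((m+1:ℕ):ℚ_[2]))⁻¹ * S‖ := by
            rw [norm_neg, norm_mul, norm_pow]
        _ ≤ ((2:ℝ)^(-(f:ℤ)))^2 * (2:ℝ)^(2*(e:ℤ)-3) := by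
            rw [hc, aux_norm_two_pow]
            gcongr
        _ = (2:ℝ)^(-(f:ℤ) + -(f:ℤ) + (2*(e:ℤ)-3)) := by
            rw [sq, aux_zpow_mul, aux_zpow_mul]
        _ ≤ (2:ℝ)^(-(2 * (f:ℤ) - 2 * e + 3)) := aux_zpow_le (by omega)
end

section
/- Let p be a prime power p and q = p^f with p^e ≤ q. For 0 < k < p^e, the binomial coefficient C(q,k) is divisible by p^{f-e+1}. -/
theorem stmt_11 (p : ℕ) (hp : p.Prime) (e f : ℕ) (he : 0 < e) (hef : e ≤ f)
    (k : ℕ) (hk : 0 < k) (hk' : k < p ^ e) :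
    p ^ (f - e + 1) ∣ (p ^ f).choose k := by
  have hkf : k ≤ p ^ f := le_trans hk'.le (Nat.pow_le_pow_right hp.pos hef)
  have hm : multiplicity p k < e := by
    by_contra h
    push_neg at h
    have : p ^ e ∣ k :=
      dvd_trans (pow_dvd_pow p h)
        (pow_multiplicity_dvd p k)
    exact absurd (Nat.le_of_dvd hk this) (not_le.2 hk')
  apply pow_dvd_of_le_emultiplicity
  rw [hp.emultiplicity_choose_prime_pow hkf hk.ne']
  exact_mod_cast (by omega : f - e + 1 ≤ f - multiplicity p k)
end

section
/- Let p be a prime, q = p^f, and p^e ≤ q. Then for 0 < k ≤ p^e, C(q-1, k-1) ≡ (-1)^{k-1} (mod p^{f-e+1}). -/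
theorem aux12 (p : ℕ) (hp : p.Prime) (e f : ℕ) (he : 0 < e) (hef : e ≤ f) :
    ∀ m, m < p ^ e →
      ((p ^ f - 1).choose m : ℤ) ≡ (-1) ^ m [ZMOD (p : ℤ) ^ (f - e + 1)] := by
  intro m
  induction m with
  | zero => intro _; simp
  | succ m ih =>
    intro hm
    have ih' := ih (Nat.lt_of_succ_lt hm)
    set q := p ^ f with hq
    have hq1 : 1 ≤ q := Nat.one_le_pow _ _ hp.pos
    have hmq : m + 1 < q := lt_of_lt_of_le hm (Nat.pow_le_pow_right hp.pos hef)
    have key : (q - 1).choose (m + 1) * (m + 1) = (q - 1).choose m * (q - 1 - m) :=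
      Nat.choose_succ_right_eq (q - 1) m
    have hmle : m ≤ q - 1 := by omega
    have keyZ : ((q - 1).choose (m + 1) : ℤ) * (m + 1) =
        ((q - 1).choose m : ℤ) * ((q : ℤ) - 1 - m) := by
      have h2 : ((q - 1 - m : ℕ) : ℤ) = (q : ℤ) - 1 - m := by
        push_cast [Nat.cast_sub (by omega : m ≤ q - 1), Nat.cast_sub hq1]; ring
      have := congrArg (Nat.cast : ℕ → ℤ) key
      push_cast at this
      rw [this, h2]
    set a := (m + 1).factorization p with ha
    set t := (m + 1) / p ^ a with htdef
    have hpa : p ^ a ∣ m + 1 := Nat.ordProj_dvd _ _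
    have hts : (p : ℤ) ^ a * t = (m + 1 : ℤ) := by
      exact_mod_cast congrArg (Nat.cast : ℕ → ℤ) (Nat.mul_div_cancel' hpa)
    have hpt : ¬ p ∣ t := Nat.not_dvd_ordCompl hp (Nat.succ_ne_zero m)
    have hae : a < e := by
      have h1 : p ^ a ≤ m + 1 := Nat.le_of_dvd (Nat.succ_pos m) hpa
      exact (Nat.pow_lt_pow_iff_right hp.one_lt).mp (lt_of_le_of_lt h1 hm)
    set P : ℤ := (p : ℤ) ^ (f - e + 1) with hP
    have hdvd' : (p : ℤ) ^ a * P ∣ (p : ℤ) ^ a *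
        (((-1) ^ (m + 1) - ((q - 1).choose (m + 1) : ℤ)) * t) := by
      have heq : (p : ℤ) ^ a * (((-1) ^ (m + 1) - ((q - 1).choose (m + 1) : ℤ)) * t)
          = (((q - 1).choose m : ℤ) - (-1) ^ m) * (m + 1)
            - ((q - 1).choose m : ℤ) * q := by
        have : (p : ℤ) ^ a * (((-1) ^ (m + 1) - ((q - 1).choose (m + 1) : ℤ)) * t)
            = ((-1) ^ (m + 1) - ((q - 1).choose (m + 1) : ℤ)) * ((p:ℤ)^a * t) := by ring
        rw [this, hts, sub_mul, keyZ]
        ring_nf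
      rw [heq]
      have d1 : (p : ℤ) ^ a * P ∣ (((q - 1).choose m : ℤ) - (-1) ^ m) * (m + 1) := by
        rw [← hts]
        have h1 : P ∣ ((q - 1).choose m : ℤ) - (-1) ^ m :=
          Int.ModEq.dvd ih'.symm
        calc (p : ℤ) ^ a * P ∣ (p : ℤ) ^ a * ((((q - 1).choose m : ℤ) - (-1) ^ m) * t) :=
              mul_dvd_mul_left _ (Dvd.dvd.mul_right h1 t)
          _ = (((q - 1).choose m : ℤ) - (-1) ^ m) * ((p:ℤ)^a * t) := by ring
      have d2 : (p : ℤ) ^ a * P ∣ ((q - 1).choose m : ℤ) * q := by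
        have : (p : ℤ) ^ a * P = (p : ℤ) ^ (a + (f - e + 1)) := by rw [pow_add]
        rw [this]
        have : ((q : ℕ) : ℤ) = (p : ℤ) ^ f := by push_cast [hq]; ring
        rw [this]
        exact Dvd.dvd.mul_left (pow_dvd_pow _ (by omega)) _
      exact dvd_sub d1 d2
    have hdvd : P ∣ ((-1) ^ (m + 1) - ((q - 1).choose (m + 1) : ℤ)) * t := by
      have hne : (p : ℤ) ^ a ≠ 0 := pow_ne_zero _ (by exact_mod_cast hp.pos.ne')
      exact (mul_dvd_mul_iff_left hne).mp hdvd'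
    have hcop : IsCoprime P (t : ℤ) := by
      rw [hP]
      have hnat : Nat.Coprime (p ^ (f - e + 1)) t :=
        Nat.Coprime.pow_left _ ((hp.coprime_iff_not_dvd).mpr hpt)
      have := Int.isCoprime_iff_gcd_eq_one.mpr (by
        rw [Int.gcd_natCast_natCast]; exact hnat)
      push_cast at this ⊢
      exact this
    exact Int.modEq_iff_dvd.mpr (hcop.dvd_of_dvd_mul_right hdvd)

theorem stmt_12 (p : ℕ) (hp : p.Prime) (e f : ℕ) (he : 0 < e) (hef : e ≤ f)
    (k : ℕ) (hk : 0 < k) (hk' : k ≤ p ^ e) :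
    ((p ^ f - 1).choose (k - 1) : ℤ) ≡ (-1) ^ (k - 1) [ZMOD (p : ℤ) ^ (f - e + 1)] := by
  exact aux12 p hp e f he hef (k - 1) (by omega)
end

section
/- Let p > 3 be a prime and let p^e ≤ p^f be powers of p with e ≤ f. Then C(2p^f, p^f) ≡ C(2p^e, p^e) (mod p^{3e+3}). -/
open Finset

lemma aux_dvd_of_castHom_eq_zero {a b : ℕ} [NeZero a] [NeZero b] (hab : a ∣ b) {x : ZMod b}
    (h : ZMod.castHom hab (ZMod a) x = 0) : (a : ZMod b) ∣ x := by
  have hx : ((x.val : ℕ) : ZMod b) = x := ZMod.natCast_zmod_val x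
  have h2 : ((x.val : ℕ) : ZMod a) = 0 := by
    rw [← map_natCast (ZMod.castHom hab (ZMod a)), hx, h]
  obtain ⟨c, hc⟩ := (ZMod.natCast_eq_zero_iff _ _).mp h2
  exact ⟨(c : ZMod b), by rw [← hx, hc]; push_cast; ring⟩

lemma aux_castHom_inv {a b : ℕ} (hab : a ∣ b) (x : ZMod b) (hx : IsUnit x) :
    ZMod.castHom hab (ZMod a) (x⁻¹) = (ZMod.castHom hab (ZMod a) x)⁻¹ := by
  symm
  apply ZMod.inv_eq_of_mul_eq_one
  rw [← map_mul, ZMod.mul_inv_of_unit x hx, map_one]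

lemma aux_prod_one_add {R : Type*} [CommRing R] {ι : Type*} (s : Finset ι) (x : ι → R)
    (h3 : ∀ a b c, x a * x b * x c = 0) :
    2 * ∏ i ∈ s, (1 + x i) =
      2 + 2 * (∑ i ∈ s, x i) + (∑ i ∈ s, x i) ^ 2 - ∑ i ∈ s, (x i) ^ 2 := by
  classical
  induction s using Finset.induction_on with
  | empty => simp
  | @insert a s ha ih =>
    rw [Finset.prod_insert ha, Finset.sum_insert ha, Finset.sum_insert ha]
    have hS2 : x a * (∑ i ∈ s, x i) ^ 2 = 0 := by
      rw [sq, Finset.sum_mul_sum, Finset.mul_sum]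
      refine Finset.sum_eq_zero fun i _ => ?_
      rw [Finset.mul_sum]
      exact Finset.sum_eq_zero fun j _ => by rw [← mul_assoc]; exact h3 a i j
    have hQ : x a * ∑ i ∈ s, (x i) ^ 2 = 0 := by
      rw [Finset.mul_sum]
      refine Finset.sum_eq_zero fun i _ => ?_
      rw [sq, ← mul_assoc]; exact h3 a i i
    have h2 : 2 * ((1 + x a) * ∏ i ∈ s, (1 + x i)) = (1 + x a) * (2 * ∏ i ∈ s, (1 + x i)) := by
      ring
    rw [h2, ih]
    linear_combination hS2 - hQ

lemma aux_sum_units_sq {n : ℕ} [NeZero n] (hn2 : Nat.Coprime 2 n) (hn3 : Nat.Coprime 3 n) :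
    ∑ u : (ZMod n)ˣ, ((u : ZMod n)) ^ 2 = 0 := by
  set S := ∑ u : (ZMod n)ˣ, ((u : ZMod n)) ^ 2 with hS
  let c : (ZMod n)ˣ := ZMod.unitOfCoprime 2 hn2
  have h1 : ∑ u : (ZMod n)ˣ, (((c * u : (ZMod n)ˣ) : ZMod n)) ^ 2 = S :=
    Equiv.sum_comp (Equiv.mulLeft c) (fun u : (ZMod n)ˣ => ((u : ZMod n)) ^ 2)
  have h2 : ∑ u : (ZMod n)ˣ, (((c * u : (ZMod n)ˣ) : ZMod n)) ^ 2 = (2 : ZMod n) ^ 2 * S := by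
    rw [Finset.mul_sum]
    refine Finset.sum_congr rfl fun u _ => ?_
    have : ((c : ZMod n)) = (2 : ℕ) := ZMod.coe_unitOfCoprime 2 hn2
    push_cast at this
    rw [Units.val_mul, mul_pow, this]
  have h3 : ((3 : ℕ) : ZMod n) * S = 0 := by
    have := h1.symm.trans h2
    push_cast
    linear_combination -this
  have hu : IsUnit ((3 : ℕ) : ZMod n) := (ZMod.isUnit_iff_coprime 3 n).mpr hn3
  calc S = (((3:ℕ) : ZMod n)⁻¹ * ((3:ℕ) : ZMod n)) * S := by
            rw [ZMod.inv_mul_of_unit _ hu, one_mul]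
    _ = ((3:ℕ) : ZMod n)⁻¹ * (((3:ℕ) : ZMod n) * S) := by ring
    _ = 0 := by rw [h3, mul_zero]

lemma aux_sum_transfer (p : ℕ) (hp : p.Prime) (t : ℕ) (ht : 0 < t) [NeZero (p ^ t)]
    (g : ZMod (p ^ t) → ZMod (p ^ t)) :
    ∑ i ∈ (Finset.Ico 1 (p ^ t + 1)).filter (fun i => ¬ p ∣ i), g ((i : ZMod (p ^ t)))
      = ∑ u : (ZMod (p ^ t))ˣ, g ((u : ZMod (p ^ t))) := by
  classical
  have hPgt1 : 1 < p ^ t := Nat.one_lt_pow ht.ne' hp.one_lt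
  refine Finset.sum_nbij'
    (i := fun a => if h : IsUnit ((a : ZMod (p ^ t))) then h.unit else 1)
    (j := fun u => ((u : ZMod (p ^ t))).val) ?_ ?_ ?_ ?_ ?_
  · intro a _; exact Finset.mem_univ _
  · intro u _
    have hcop : Nat.Coprime ((u : ZMod (p ^ t))).val (p ^ t) := ZMod.val_coe_unit_coprime u
    have hlt : ((u : ZMod (p ^ t))).val < p ^ t := ZMod.val_lt _
    have hne : ((u : ZMod (p ^ t))).val ≠ 0 := by
      intro h0
      rw [h0] at hcop
      have : p ^ t = 1 := by simpa [Nat.coprime_zero_left] using hcop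
      omega
    simp only [Finset.mem_filter, Finset.mem_Ico]
    refine ⟨⟨by omega, by omega⟩, ?_⟩
    intro hdvd
    have h4 := Nat.dvd_gcd hdvd (dvd_pow_self p ht.ne')
    rw [Nat.Coprime] at hcop
    rw [hcop] at h4
    have := Nat.le_of_dvd one_pos h4
    have := hp.two_le
    omega
  · intro a ha
    simp only [Finset.mem_filter, Finset.mem_Ico] at ha
    have hcop : Nat.Coprime a (p ^ t) :=
      Nat.Coprime.pow_right t ((Nat.Prime.coprime_iff_not_dvd hp).mpr ha.2).symm
    have hu : IsUnit ((a : ZMod (p ^ t))) := (ZMod.isUnit_iff_coprime a _).mpr hcop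
    simp only [dif_pos hu]
    have h5 : (hu.unit : ZMod (p ^ t)) = (a : ZMod (p ^ t)) := hu.unit_spec
    rw [h5]
    have halt : a < p ^ t := by
      rcases Nat.lt_or_ge a (p ^ t) with h | h
      · exact h
      · exfalso
        have : a = p ^ t := by omega
        exact ha.2 (this ▸ dvd_pow_self p ht.ne')
    exact ZMod.val_natCast_of_lt halt
  · intro u _
    have hu : IsUnit ((((u : ZMod (p ^ t))).val : ZMod (p ^ t))) := by
      rw [ZMod.natCast_zmod_val]; exact u.isUnit
    simp only [dif_pos hu]
    apply Units.ext
    rw [hu.unit_spec, ZMod.natCast_zmod_val]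
  · intro a ha
    simp only [Finset.mem_filter, Finset.mem_Ico] at ha
    have hcop : Nat.Coprime a (p ^ t) :=
      Nat.Coprime.pow_right t ((Nat.Prime.coprime_iff_not_dvd hp).mpr ha.2).symm
    have hu : IsUnit ((a : ZMod (p ^ t))) := (ZMod.isUnit_iff_coprime a _).mpr hcop
    simp only [dif_pos hu, hu.unit_spec]

lemma aux_coprime2 {p : ℕ} (hp : p.Prime) (hp3 : 3 < p) (t : ℕ) : Nat.Coprime 2 (p ^ t) :=
  Nat.Coprime.pow_right t ((Nat.coprime_primes Nat.prime_two hp).mpr (by omega))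

lemma aux_coprime3 {p : ℕ} (hp : p.Prime) (hp3 : 3 < p) (t : ℕ) : Nat.Coprime 3 (p ^ t) :=
  Nat.Coprime.pow_right t ((Nat.coprime_primes Nat.prime_three hp).mpr (by omega))

lemma aux_shift (k : ℕ) :
    (∏ i ∈ Ico 1 (k + 1), (k + i)) * Nat.factorial k = Nat.factorial (2 * k) := by
  have h1 : ∏ i ∈ Ico 1 (k + 1), (k + i) = ∏ i ∈ Ico (k + 1) (2 * k + 1), i := by
    rw [Finset.prod_Ico_eq_prod_range, Finset.prod_Ico_eq_prod_range]
    have h : 2 * k + 1 - (k + 1) = k + 1 - 1 := by omega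
    rw [h]
    exact Finset.prod_congr rfl fun i _ => by omega
  rw [h1, mul_comm, ← Finset.prod_Ico_id_eq_factorial,
    Finset.prod_Ico_consecutive _ (by omega : 1 ≤ k + 1) (by omega : k + 1 ≤ 2 * k + 1)]
  have h2 : 2 * k + 1 = (2 * k) + 1 := rfl
  rw [h2, Finset.prod_Ico_id_eq_factorial]

lemma aux_split (p : ℕ) (hp : p.Prime) (n0 : ℕ) (g : ℕ → ℕ) :
    ∏ i ∈ Ico 1 (p * n0 + 1), g i =
      (∏ i ∈ (Ico 1 (p * n0 + 1)).filter (fun i => ¬ p ∣ i), g i) *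
        ∏ j ∈ Ico 1 (n0 + 1), g (p * j) := by
  classical
  rw [← Finset.prod_filter_mul_prod_filter_not (Ico 1 (p * n0 + 1)) (fun i => ¬ p ∣ i) g]
  congr 1
  have hf : (Ico 1 (p * n0 + 1)).filter (fun i => ¬¬ p ∣ i)
      = (Ico 1 (p * n0 + 1)).filter (fun i => p ∣ i) :=
    Finset.filter_congr fun x _ => not_not
  rw [hf]
  refine (Finset.prod_nbij' (i := fun j => p * j) (j := fun i => i / p) ?_ ?_ ?_ ?_ ?_).symm
  · intro j hj
    simp only [Finset.mem_Ico] at hj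
    simp only [Finset.mem_filter, Finset.mem_Ico]
    have hp1 := hp.one_lt
    refine ⟨⟨by nlinarith, by nlinarith⟩, Dvd.intro j rfl⟩
  · intro a ha
    simp only [Finset.mem_filter, Finset.mem_Ico] at ha
    obtain ⟨⟨h1, h2⟩, hd⟩ := ha
    simp only [Finset.mem_Ico]
    constructor
    · rw [Nat.one_le_div_iff hp.pos]
      exact Nat.le_of_dvd (by omega) hd
    · have h3 : a / p ≤ (p * n0) / p := Nat.div_le_div_right (by omega)
      rw [Nat.mul_div_cancel_left n0 hp.pos] at h3
      omega
  · intro j hj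
    exact Nat.mul_div_cancel_left j hp.pos
  · intro a ha
    simp only [Finset.mem_filter] at ha
    exact Nat.mul_div_cancel' ha.2
  · intro j _
    rfl

lemma aux_sum_inv_sq (p : ℕ) (hp : p.Prime) (hp3 : 3 < p) (t : ℕ) (ht : 0 < t)
    [NeZero (p ^ t)] :
    ∑ i ∈ (Finset.Ico 1 (p ^ t + 1)).filter (fun i => ¬ p ∣ i),
      (((i : ZMod (p ^ t)))⁻¹) ^ 2 = 0 := by
  rw [aux_sum_transfer p hp t ht (fun x => (x⁻¹) ^ 2)]
  have h1 : ∀ u : (ZMod (p ^ t))ˣ,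
      (((u : ZMod (p ^ t)))⁻¹) ^ 2 = (((u⁻¹ : (ZMod (p ^ t))ˣ) : ZMod (p ^ t))) ^ 2 :=
    fun u => by rw [ZMod.inv_coe_unit]
  rw [Finset.sum_congr rfl fun u _ => h1 u]
  rw [show (∑ u : (ZMod (p ^ t))ˣ, (((u⁻¹ : (ZMod (p ^ t))ˣ) : ZMod (p ^ t))) ^ 2)
      = ∑ u : (ZMod (p ^ t))ˣ, ((u : ZMod (p ^ t))) ^ 2 from
    Equiv.sum_comp (Equiv.inv (ZMod (p ^ t))ˣ)
      (fun u : (ZMod (p ^ t))ˣ => ((u : ZMod (p ^ t))) ^ 2)]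
  exact aux_sum_units_sq (aux_coprime2 hp hp3 t) (aux_coprime3 hp hp3 t)

lemma aux_main_prod (p : ℕ) (hp : p.Prime) (hp3 : 3 < p) (m : ℕ) :
    ((∏ i ∈ (Ico 1 (p ^ (m + 1) + 1)).filter (fun i => ¬ p ∣ i), (p ^ (m + 1) + i) : ℕ)
        : ZMod (p ^ (3 * m + 3)))
      = ((∏ i ∈ (Ico 1 (p ^ (m + 1) + 1)).filter (fun i => ¬ p ∣ i), i : ℕ)
        : ZMod (p ^ (3 * m + 3))) := by
  classical
  set N := 3 * m + 3 with hN
  set P := p ^ (m + 1) with hP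
  haveI hNZ : NeZero (p ^ N) := ⟨pow_ne_zero N hp.pos.ne'⟩
  haveI hPZ : NeZero P := ⟨pow_ne_zero (m + 1) hp.pos.ne'⟩
  set R := ZMod (p ^ N) with hR
  set S := (Ico 1 (P + 1)).filter (fun i => ¬ p ∣ i) with hS
  -- basic membership facts
  have hmem : ∀ i ∈ S, 1 ≤ i ∧ i < P ∧ ¬ p ∣ i := by
    intro i hi
    simp only [hS, Finset.mem_filter, Finset.mem_Ico] at hi
    obtain ⟨⟨ha, hb⟩, hc⟩ := hi
    refine ⟨ha, ?_, hc⟩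
    rcases Nat.lt_or_ge i P with h | h
    · exact h
    · exfalso
      have : i = P := by omega
      exact hc (this ▸ dvd_pow_self p (Nat.succ_ne_zero m))
  have hcop : ∀ i ∈ S, ∀ t : ℕ, Nat.Coprime i (p ^ t) := fun i hi t =>
    Nat.Coprime.pow_right t ((Nat.Prime.coprime_iff_not_dvd hp).mpr (hmem i hi).2.2).symm
  have hunit : ∀ i ∈ S, IsUnit ((i : R)) := fun i hi =>
    (ZMod.isUnit_iff_coprime i (p ^ N)).mpr (hcop i hi N)
  have hunitP : ∀ i ∈ S, IsUnit ((i : ZMod P)) := fun i hi =>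
    (ZMod.isUnit_iff_coprime i P).mpr (hcop i hi (m + 1))
  set MP : R := ((P : ℕ) : R) with hMP
  have hM3 : MP ^ 3 = 0 := by
    rw [hMP, ← Nat.cast_pow, hP, ← pow_mul]
    have : (m + 1) * 3 = N := by omega
    rw [this, ZMod.natCast_self]
  -- the x function
  set x : ℕ → R := fun i => MP * ((i : ℕ) : R)⁻¹ with hx
  have h3 : ∀ a b c : ℕ, x a * x b * x c = 0 := by
    intro a b c
    have : x a * x b * x c = MP ^ 3 * (((a : ℕ) : R)⁻¹ * ((b : ℕ) : R)⁻¹ * ((c : ℕ) : R)⁻¹) := by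
      rw [hx]; ring
    rw [this, hM3, zero_mul]
  -- P divides p^N
  have hdvd : P ∣ p ^ N := by rw [hP]; exact pow_dvd_pow p (by omega)
  set π := ZMod.castHom hdvd (ZMod P) with hπ
  -- castHom facts
  have hπinv : ∀ i ∈ S, π (((i : ℕ) : R)⁻¹) = ((i : ZMod P))⁻¹ := by
    intro i hi
    rw [aux_castHom_inv hdvd _ (hunit i hi)]
    congr 1
    exact map_natCast π i
  -- T2 divisibility
  have hT2 : MP ∣ ∑ i ∈ S, (((i : ℕ) : R)⁻¹) ^ 2 := by
    apply aux_dvd_of_castHom_eq_zero hdvd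
    rw [map_sum]
    have : ∀ i ∈ S, π ((((i : ℕ) : R)⁻¹) ^ 2) = (((i : ZMod P))⁻¹) ^ 2 := by
      intro i hi
      rw [map_pow, hπinv i hi]
    rw [Finset.sum_congr rfl this]
    exact aux_sum_inv_sq p hp hp3 (m + 1) (Nat.succ_pos m)
  -- Q = 0
  have hQ : ∑ i ∈ S, (x i) ^ 2 = 0 := by
    obtain ⟨c, hc⟩ := hT2
    have : ∑ i ∈ S, (x i) ^ 2 = MP ^ 2 * ∑ i ∈ S, (((i : ℕ) : R)⁻¹) ^ 2 := by
      rw [Finset.mul_sum]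
      exact Finset.sum_congr rfl fun i _ => by rw [hx]; ring
    rw [this, hc, show MP ^ 2 * (MP * c) = MP ^ 3 * c by ring, hM3, zero_mul]
  -- Σ = 0
  have hsub : ∀ i ∈ S, P - i ∈ S ∧ P - (P - i) = i := by
    intro i hi
    obtain ⟨h1, h2, h3'⟩ := hmem i hi
    constructor
    · simp only [hS, Finset.mem_filter, Finset.mem_Ico]
      refine ⟨⟨by omega, by omega⟩, ?_⟩
      intro hd
      have hPd : p ∣ P := dvd_pow_self p (Nat.succ_ne_zero m)
      have := Nat.dvd_sub hPd hd
      rw [show P - (P - i) = i by omega] at this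
      exact h3' this
    · omega
  have hSigre : ∑ i ∈ S, x i = ∑ i ∈ S, x (P - i) := by
    refine Finset.sum_nbij' (i := fun a => P - a) (j := fun a => P - a) ?_ ?_ ?_ ?_ ?_
    · intro a ha; exact (hsub a ha).1
    · intro a ha; exact (hsub a ha).1
    · intro a ha; exact (hsub a ha).2
    · intro a ha; exact (hsub a ha).2
    · intro a ha
      rw [(hsub a ha).2]
  have hcastsub : ∀ i ∈ S, (((P - i : ℕ) : ℕ) : R) = MP - ((i : ℕ) : R) := by
    intro i hi
    have := (hmem i hi).2.1
    rw [Nat.cast_sub (by omega)]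
  -- W divisibility
  have hW : MP ∣ ∑ i ∈ S, ((i : ℕ) : R)⁻¹ * (((P - i : ℕ) : ℕ) : R)⁻¹ := by
    apply aux_dvd_of_castHom_eq_zero hdvd
    rw [map_sum]
    have hterm : ∀ i ∈ S, π (((i : ℕ) : R)⁻¹ * (((P - i : ℕ) : ℕ) : R)⁻¹)
        = -((((i : ZMod P))⁻¹) ^ 2) := by
      intro i hi
      have hi' := (hsub i hi).1
      rw [map_mul, hπinv i hi, hπinv _ hi']
      have hc1 : (((P - i : ℕ) : ℕ) : ZMod P) = -((i : ZMod P)) := by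
        have hiP : i ≤ P := le_of_lt (hmem i hi).2.1
        rw [Nat.cast_sub hiP, ZMod.natCast_self, zero_sub]
      rw [hc1]
      have hneg : (-((i : ZMod P)))⁻¹ = -(((i : ZMod P))⁻¹) := by
        apply ZMod.inv_eq_of_mul_eq_one
        rw [neg_mul_neg]
        exact ZMod.mul_inv_of_unit _ (hunitP i hi)
      rw [hneg]
      ring
    rw [Finset.sum_congr rfl hterm, Finset.sum_neg_distrib,
      aux_sum_inv_sq p hp hp3 (m + 1) (Nat.succ_pos m), neg_zero]
  have h2unit : IsUnit ((2 : ℕ) : R) :=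
    (ZMod.isUnit_iff_coprime 2 (p ^ N)).mpr (aux_coprime2 hp hp3 N)
  have hSig : ∑ i ∈ S, x i = 0 := by
    have h2Sig : ((2 : ℕ) : R) * ∑ i ∈ S, x i = 0 := by
      have : ((2 : ℕ) : R) * ∑ i ∈ S, x i = ∑ i ∈ S, x i + ∑ i ∈ S, x (P - i) := by
        rw [← hSigre]; push_cast; ring
      rw [this, ← Finset.sum_add_distrib]
      have hterm : ∀ i ∈ S, x i + x (P - i)
          = MP ^ 2 * (((i : ℕ) : R)⁻¹ * (((P - i : ℕ) : ℕ) : R)⁻¹) := by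
        intro i hi
        have hi' := (hsub i hi).1
        set u : R := ((i : ℕ) : R) with hu
        set v : R := (((P - i : ℕ) : ℕ) : R) with hv
        have huv : u + v = MP := by
          rw [hu, hv, hcastsub i hi]; ring
        have hu1 : u * u⁻¹ = 1 := ZMod.mul_inv_of_unit _ (hunit i hi)
        have hv1 : v * v⁻¹ = 1 := ZMod.mul_inv_of_unit _ (hunit _ hi')
        have key : u⁻¹ + v⁻¹ = MP * (u⁻¹ * v⁻¹) := by
          rw [← huv]
          linear_combination -v⁻¹ * hu1 - u⁻¹ * hv1
        rw [hx]
        calc MP * u⁻¹ + MP * v⁻¹ = MP * (u⁻¹ + v⁻¹) := by ring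
          _ = MP * (MP * (u⁻¹ * v⁻¹)) := by rw [key]
          _ = MP ^ 2 * (u⁻¹ * v⁻¹) := by ring
      rw [Finset.sum_congr rfl hterm, ← Finset.mul_sum]
      obtain ⟨c, hc⟩ := hW
      rw [hc, show MP ^ 2 * (MP * c) = MP ^ 3 * c by ring, hM3, zero_mul]
    calc ∑ i ∈ S, x i = (((2 : ℕ) : R)⁻¹ * ((2 : ℕ) : R)) * ∑ i ∈ S, x i := by
          rw [ZMod.inv_mul_of_unit _ h2unit, one_mul]
      _ = ((2 : ℕ) : R)⁻¹ * (((2 : ℕ) : R) * ∑ i ∈ S, x i) := by ring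
      _ = 0 := by rw [h2Sig, mul_zero]
  -- product of (1 + x i) = 1
  have hprod1 : ∏ i ∈ S, (1 + x i) = 1 := by
    have h2p : ((2 : ℕ) : R) * ∏ i ∈ S, (1 + x i) = ((2 : ℕ) : R) * 1 := by
      push_cast
      rw [aux_prod_one_add S x h3, hSig, hQ]
      ring
    calc ∏ i ∈ S, (1 + x i)
        = (((2 : ℕ) : R)⁻¹ * ((2 : ℕ) : R)) * ∏ i ∈ S, (1 + x i) := by
          rw [ZMod.inv_mul_of_unit _ h2unit, one_mul]
      _ = ((2 : ℕ) : R)⁻¹ * (((2 : ℕ) : R) * ∏ i ∈ S, (1 + x i)) := by ring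
      _ = ((2 : ℕ) : R)⁻¹ * (((2 : ℕ) : R) * 1) := by rw [h2p]
      _ = 1 := by rw [mul_one, ZMod.inv_mul_of_unit _ h2unit]
  -- conclude
  rw [Nat.cast_prod, Nat.cast_prod]
  have hfac : ∀ i ∈ S, (((P + i : ℕ) : R)) = ((i : ℕ) : R) * (1 + x i) := by
    intro i hi
    have hu1 : ((i : ℕ) : R) * ((i : ℕ) : R)⁻¹ = 1 := ZMod.mul_inv_of_unit _ (hunit i hi)
    push_cast
    rw [hx]
    calc ((P : ℕ) : R) + ((i : ℕ) : R)
        = ((i : ℕ) : R) + (((i : ℕ) : R) * ((i : ℕ) : R)⁻¹) * ((P : ℕ) : R) := by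
          rw [hu1]; ring
      _ = ((i : ℕ) : R) * (1 + MP * ((i : ℕ) : R)⁻¹) := by rw [hMP]; ring
  rw [Finset.prod_congr rfl hfac, Finset.prod_mul_distrib, hprod1, mul_one]

lemma jacobsthal_step (p : ℕ) (hp : p.Prime) (hp3 : 3 < p) (m : ℕ) :
    (2 * p ^ (m + 1)).choose (p ^ (m + 1)) ≡ (2 * p ^ m).choose (p ^ m)
      [MOD p ^ (3 * m + 3)] := by
  classical
  set n := p ^ m with hn
  set P := p ^ (m + 1) with hPdef
  have hPn : P = p * n := by rw [hPdef, hn, pow_succ]; ring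
  have hnpos : 0 < n := Nat.pow_pos (n := m) hp.pos
  have hcard : (Ico 1 (n + 1)).card = n := by rw [Nat.card_Ico]; omega
  have key1 : (∏ j ∈ Ico 1 (n + 1), (P + p * j)) = p ^ n * ∏ j ∈ Ico 1 (n + 1), (n + j) := by
    have h9 : ∀ j ∈ Ico 1 (n + 1), P + p * j = p * (n + j) := fun j _ => by rw [hPn]; ring
    rw [Finset.prod_congr rfl h9, Finset.prod_mul_distrib, Finset.prod_const, hcard]
  have key2 : (∏ j ∈ Ico 1 (n + 1), (p * j)) = p ^ n * Nat.factorial n := by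
    rw [Finset.prod_mul_distrib, Finset.prod_const, hcard, Finset.prod_Ico_id_eq_factorial]
  have hsplit1 : ∏ i ∈ Ico 1 (P + 1), (P + i)
      = (∏ i ∈ (Ico 1 (P + 1)).filter (fun i => ¬ p ∣ i), (P + i))
        * (p ^ n * ∏ j ∈ Ico 1 (n + 1), (n + j)) := by
    have h0 := aux_split p hp n (fun i => P + i)
    rw [← hPn] at h0
    rw [h0, key1]
  have hsplit2 : Nat.factorial P
      = (∏ i ∈ (Ico 1 (P + 1)).filter (fun i => ¬ p ∣ i), i) * (p ^ n * Nat.factorial n) := by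
    have h0 := aux_split p hp n (fun i => i)
    rw [← hPn] at h0
    rw [← Finset.prod_Ico_id_eq_factorial, h0, key2]
  have hchoose1 : (2 * P).choose P * Nat.factorial P * Nat.factorial P
      = Nat.factorial (2 * P) := by
    have := Nat.choose_mul_factorial_mul_factorial (show P ≤ 2 * P by omega)
    rwa [show 2 * P - P = P by omega] at this
  have hchoose2 : (2 * n).choose n * Nat.factorial n * Nat.factorial n
      = Nat.factorial (2 * n) := by
    have := Nat.choose_mul_factorial_mul_factorial (show n ≤ 2 * n by omega)
    rwa [show 2 * n - n = n by omega] at this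
  have h1 : (2 * P).choose P * Nat.factorial P
      = (∏ i ∈ (Ico 1 (P + 1)).filter (fun i => ¬ p ∣ i), (P + i))
        * (p ^ n * ∏ j ∈ Ico 1 (n + 1), (n + j)) := by
    apply Nat.eq_of_mul_eq_mul_right (Nat.factorial_pos P)
    rw [hchoose1, ← aux_shift P, hsplit1]
  have hT : ∏ j ∈ Ico 1 (n + 1), (n + j) = (2 * n).choose n * Nat.factorial n := by
    apply Nat.eq_of_mul_eq_mul_right (Nat.factorial_pos n)
    rw [aux_shift n, ← hchoose2]
  have hId : (2 * P).choose P * (∏ i ∈ (Ico 1 (P + 1)).filter (fun i => ¬ p ∣ i), i)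
      = (2 * n).choose n * (∏ i ∈ (Ico 1 (P + 1)).filter (fun i => ¬ p ∣ i), (P + i)) := by
    apply Nat.eq_of_mul_eq_mul_right (show 0 < p ^ n * Nat.factorial n from
      Nat.mul_pos (Nat.pow_pos (n := n) hp.pos) (Nat.factorial_pos n))
    calc (2 * P).choose P * (∏ i ∈ (Ico 1 (P + 1)).filter (fun i => ¬ p ∣ i), i)
          * (p ^ n * Nat.factorial n)
        = (2 * P).choose P
          * ((∏ i ∈ (Ico 1 (P + 1)).filter (fun i => ¬ p ∣ i), i)
            * (p ^ n * Nat.factorial n)) := by ring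
      _ = (2 * P).choose P * Nat.factorial P := by rw [← hsplit2]
      _ = (∏ i ∈ (Ico 1 (P + 1)).filter (fun i => ¬ p ∣ i), (P + i))
          * (p ^ n * ∏ j ∈ Ico 1 (n + 1), (n + j)) := h1
      _ = (∏ i ∈ (Ico 1 (P + 1)).filter (fun i => ¬ p ∣ i), (P + i))
          * (p ^ n * ((2 * n).choose n * Nat.factorial n)) := by rw [hT]
      _ = (2 * n).choose n * (∏ i ∈ (Ico 1 (P + 1)).filter (fun i => ¬ p ∣ i), (P + i))
          * (p ^ n * Nat.factorial n) := by ring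
  have hAD : (∏ i ∈ (Ico 1 (P + 1)).filter (fun i => ¬ p ∣ i), (P + i))
      ≡ (∏ i ∈ (Ico 1 (P + 1)).filter (fun i => ¬ p ∣ i), i) [MOD p ^ (3 * m + 3)] := by
    rw [← ZMod.natCast_eq_natCast_iff]
    exact aux_main_prod p hp hp3 m
  have hchain : (2 * P).choose P * (∏ i ∈ (Ico 1 (P + 1)).filter (fun i => ¬ p ∣ i), i)
      ≡ (2 * n).choose n * (∏ i ∈ (Ico 1 (P + 1)).filter (fun i => ¬ p ∣ i), i)
        [MOD p ^ (3 * m + 3)] := by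
    rw [hId]
    exact Nat.ModEq.mul_left _ hAD
  have hcopD : Nat.gcd (p ^ (3 * m + 3))
      (∏ i ∈ (Ico 1 (P + 1)).filter (fun i => ¬ p ∣ i), i) = 1 := by
    have : Nat.Coprime (p ^ (3 * m + 3))
        (∏ i ∈ (Ico 1 (P + 1)).filter (fun i => ¬ p ∣ i), i) := by
      apply Nat.Coprime.prod_right
      intro i hi
      simp only [Finset.mem_filter, Finset.mem_Ico] at hi
      exact Nat.Coprime.pow_left _ ((Nat.Prime.coprime_iff_not_dvd hp).mpr hi.2)
    exact this
  exact Nat.ModEq.cancel_right_of_coprime hcopD hchain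

theorem stmt_15 (p : ℕ) (hp : p.Prime) (hp3 : 3 < p) (e f : ℕ) (he : 0 < e) (hef : e ≤ f) :
    (2 * p ^ f).choose (p ^ f) ≡ (2 * p ^ e).choose (p ^ e) [MOD p ^ (3 * e + 3)] := by
  induction f, hef using Nat.le_induction with
  | base => rfl
  | succ f hef ih =>
    have hstep := jacobsthal_step p hp hp3 f
    have hweak : (2 * p ^ (f + 1)).choose (p ^ (f + 1)) ≡ (2 * p ^ f).choose (p ^ f)
        [MOD p ^ (3 * e + 3)] :=
      Nat.ModEq.of_dvd (pow_dvd_pow p (by omega)) hstep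
    exact hweak.trans ih
end

section
/- Let 3^e ≤ 3^f with e ≤ f. Then C(2·3^f, 3^f) ≡ C(2·3^e, 3^e) (mod 3^{3e+2}). -/
open Finset Nat

lemma six_sumsq (n : ℕ) : 6 * ∑ j ∈ range (n+1), j^2 = n*(n+1)*(2*n+1) := by
  induction n with
  | zero => simp
  | succ p ih => rw [Finset.sum_range_succ, Nat.mul_add, ih]; ring

lemma sum_mult (t : ℕ) : ∑ j ∈ (range (3*t)).filter (fun j => 3 ∣ j), j^2
    = 9 * ∑ i ∈ range t, i^2 := by
  rw [Finset.mul_sum]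
  refine Finset.sum_bij' (fun a _ => a/3) (fun b _ => 3*b) ?_ ?_ ?_ ?_ ?_
  · intro a ha; simp only [mem_filter, mem_range] at ha ⊢; omega
  · intro b hb; simp only [mem_range] at hb; simp only [mem_filter, mem_range]; omega
  · intro a ha; simp only [mem_filter] at ha; omega
  · intro b hb; omega
  · intro a ha; simp only [mem_filter, mem_range] at ha
    obtain ⟨_, c, rfl⟩ := ha
    rw [Nat.mul_div_cancel_left _ (by norm_num : 0 < 3)]; ring

-- key divisibility: 3^k ∣ 3 * Σ_{j<3^k, 3∤j} j²
lemma div_sumsq (k : ℕ) (hk : 1 ≤ k) :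
    3^k ∣ 3 * ∑ j ∈ (range (3^k)).filter (fun j => ¬ 3 ∣ j), j^2 := by
  set N := 3^k with hN
  set t := 3^(k-1) with ht
  have hNt : N = 3 * t := by rw [hN, ht, ← pow_succ']; congr 1; omega
  set C := ∑ j ∈ (range N).filter (fun j => ¬ 3 ∣ j), j^2 with hC
  set A := ∑ j ∈ range N, j^2 with hA
  set B := ∑ i ∈ range t, i^2 with hB
  have hsplit : C + 9*B = A := by
    rw [hC, hA, hB, ← sum_mult t, ← hNt]
    rw [add_comm]
    exact Finset.sum_filter_add_sum_filter_not _ _ _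
  -- N odd
  have hNo : Odd N := Odd.pow (⟨1, by norm_num⟩ : Odd 3)
  have hto : Odd t := Odd.pow (⟨1, by norm_num⟩ : Odd 3)
  obtain ⟨w, hw⟩ := hNo
  obtain ⟨v, hv⟩ := hto
  have h6A : 6 * A = (N-1)*N*(2*N-1) := by
    have h1 : N = (N-1) + 1 := by omega
    rw [hA, h1, six_sumsq (N-1)]
    have h2 : 2*(N-1)+1 = 2*N-1 := by omega
    rw [h2, ← h1]
  have h6B : 6 * B = (t-1)*t*(2*t-1) := by
    have h1 : t = (t-1) + 1 := by omega
    rw [hB, h1, six_sumsq (t-1)]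
    have h2 : 2*(t-1)+1 = 2*t-1 := by omega
    rw [h2, ← h1]
  have hdA : N ∣ 3 * A := by
    have h2 : 2 * (3*A) = 2 * (w * (N * (2*N-1))) := by
      have : (N-1) = 2*w := by omega
      calc 2*(3*A) = 6*A := by ring
        _ = (N-1)*N*(2*N-1) := h6A
        _ = 2*w*N*(2*N-1) := by rw [this]
        _ = 2*(w*(N*(2*N-1))) := by ring
    have h3 : 3*A = w*(N*(2*N-1)) := by omega
    exact ⟨w*(2*N-1), by rw [h3]; ring⟩
  have hdB : N ∣ 27 * B := by
    have h2 : 2 * (27*B) = 2 * (v * (3*N*(2*t-1))) := by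
      have h3 : (t-1) = 2*v := by omega
      calc 2*(27*B) = 9*(6*B) := by ring
        _ = 9*((t-1)*t*(2*t-1)) := by rw [h6B]
        _ = (2*v)*(3*N)*(2*t-1) := by rw [h3, hNt]; ring
        _ = 2*(v*(3*N*(2*t-1))) := by ring
    have h3 : 27*B = v*(3*N*(2*t-1)) := by omega
    exact ⟨v*(3*(2*t-1)), by rw [h3]; ring⟩
  have : 3*C + 27*B = 3*A := by omega
  have hdC : N ∣ 3*C := by
    have := Nat.dvd_sub hdA hdB
    have h4 : 3*A - 27*B = 3*C := by omega
    rwa [h4] at this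
  exact hdC

lemma zmod_inv_eq {n : ℕ} {a b : ZMod n} (h : a * b = 1) : a⁻¹ = b := by
  have ha : IsUnit a := IsUnit.of_mul_eq_one _ h
  calc a⁻¹ = a⁻¹ * (a * b) := by rw [h, mul_one]
    _ = b := by rw [← mul_assoc, ZMod.inv_mul_of_unit _ ha, one_mul]

lemma zmod_inv_unit {n : ℕ} {a : ZMod n} (h : IsUnit a) : IsUnit a⁻¹ := by
  obtain ⟨u, rfl⟩ := h
  rw [ZMod.inv_coe_unit]; exact Units.isUnit _

lemma zmod_inv_inv {n : ℕ} {a : ZMod n} (h : IsUnit a) : a⁻¹⁻¹ = a :=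
  zmod_inv_eq (ZMod.inv_mul_of_unit _ h)

lemma unit_of_notdvd {k j : ℕ} (h : ¬ 3 ∣ j) : IsUnit ((j : ZMod (3^k))) := by
  rw [ZMod.isUnit_iff_coprime]
  exact Nat.Coprime.pow_right _
    (Nat.coprime_comm.mp ((Nat.Prime.coprime_iff_not_dvd (by norm_num)).mpr h))

lemma notdvd_val {k : ℕ} (hk : 1 ≤ k) {x : ZMod (3^k)} (h : IsUnit x) : ¬ 3 ∣ x.val := by
  intro h3
  have hc : Nat.Coprime x.val (3^k) := by
    have := ZMod.val_coe_unit_coprime h.unit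
    rwa [IsUnit.unit_spec] at this
  have h2 : (3:ℕ) ∣ 3^k := dvd_pow_self 3 (by omega)
  have := Nat.dvd_gcd h3 h2
  rw [Nat.Coprime] at hc
  omega

lemma prod_add_c {n : ℕ} (s : Finset ℕ) (b : ℕ → ZMod n) (c : ZMod n) :
    ∃ r : ZMod n, ∏ j ∈ s, (b j + c) =
      ∏ j ∈ s, b j + c * (∑ j ∈ s, ∏ i ∈ s.erase j, b i) + c^2 * r := by
  classical
  induction s using Finset.induction_on with
  | empty => exact ⟨0, by simp⟩
  | @insert a s ha ih =>
    obtain ⟨r, hr⟩ := ih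
    refine ⟨b a * r + (∑ j ∈ s, ∏ i ∈ s.erase j, b i) + c * r, ?_⟩
    have hE : ∀ j ∈ s, ∏ i ∈ (insert a s).erase j, b i = b a * ∏ i ∈ s.erase j, b i := by
      intro j hj
      rw [Finset.erase_insert_of_ne (by rintro rfl; exact ha hj),
        Finset.prod_insert (fun h => ha (Finset.mem_of_mem_erase h))]
    rw [Finset.prod_insert ha, Finset.prod_insert ha, hr, Finset.sum_insert ha,
      Finset.erase_insert ha, Finset.sum_congr rfl hE, ← Finset.mul_sum]
    ring

lemma sum_erase_prod {n : ℕ} (s : Finset ℕ) (b : ℕ → ZMod n) (hb : ∀ j ∈ s, IsUnit (b j)) :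
    ∑ j ∈ s, ∏ i ∈ s.erase j, b i = (∏ i ∈ s, b i) * ∑ j ∈ s, (b j)⁻¹ := by
  rw [Finset.mul_sum]
  refine Finset.sum_congr rfl fun j hj => ?_
  calc ∏ i ∈ s.erase j, b i = (b j)⁻¹ * (b j * ∏ i ∈ s.erase j, b i) := by
        rw [← mul_assoc, ZMod.inv_mul_of_unit _ (hb j hj), one_mul]
    _ = (∏ i ∈ s, b i) * (b j)⁻¹ := by rw [Finset.mul_prod_erase s b hj, mul_comm]

def Fs (x : ℕ) : Finset ℕ := (range x).filter (fun j => ¬ 3 ∣ j)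
def Ps (x : ℕ) : ℕ := ∏ j ∈ Fs x, j

lemma Ps_pos (x : ℕ) : 0 < Ps x := by
  apply Finset.prod_pos
  intro j hj
  simp only [Fs, mem_filter] at hj
  omega

lemma not_dvd_Ps (x : ℕ) : ¬ 3 ∣ Ps x := by
  intro h
  obtain ⟨j, hj, h3⟩ := (Prime.dvd_finset_prod_iff (Nat.prime_iff.mp Nat.prime_three) _).mp h
  simp only [Fs, mem_filter] at hj
  exact hj.2 h3

lemma fact_split (n : ℕ) : (3*n)! = 3^n * n ! * Ps (3*n) := by
  rw [← Finset.prod_Ico_id_eq_factorial (3*n)]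
  rw [← Finset.prod_filter_mul_prod_filter_not (Finset.Ico 1 (3*n+1)) (fun j => 3 ∣ j) (fun j => j)]
  have h1 : ∏ j ∈ (Finset.Ico 1 (3*n+1)).filter (fun j => 3 ∣ j), j = 3^n * n ! := by
    rw [← Finset.prod_Ico_id_eq_factorial n]
    have hbij : ∏ j ∈ (Finset.Ico 1 (3*n+1)).filter (fun j => 3 ∣ j), j
        = ∏ i ∈ Finset.Ico 1 (n+1), (3*i) := by
      refine Finset.prod_bij' (fun a _ => a/3) (fun b _ => 3*b) ?_ ?_ ?_ ?_ ?_
      · intro a ha; simp only [mem_filter, Finset.mem_Ico] at ha ⊢; omega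
      · intro b hb; simp only [Finset.mem_Ico] at hb; simp only [mem_filter, Finset.mem_Ico]; omega
      · intro a ha; simp only [mem_filter] at ha; omega
      · intro b hb; omega
      · intro a ha; simp only [mem_filter, Finset.mem_Ico] at ha; omega
    rw [hbij, Finset.prod_mul_distrib, Finset.prod_const, Nat.card_Ico]
    simp
  have h2 : ∏ j ∈ (Finset.Ico 1 (3*n+1)).filter (fun j => ¬ 3 ∣ j), j = Ps (3*n) := by
    apply Finset.prod_congr _ (fun _ _ => rfl)
    ext j
    simp only [mem_filter, Finset.mem_Ico, Fs, mem_range]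
    constructor
    · rintro ⟨⟨ha, hb⟩, h3⟩; exact ⟨by omega, h3⟩
    · rintro ⟨ha, h3⟩; exact ⟨⟨by omega, by omega⟩, h3⟩
  rw [h1, h2]

lemma Ps_shift (N : ℕ) : Ps (3*(2*N)) = Ps (3*N) * ∏ j ∈ Fs (3*N), (3*N + j) := by
  have key : ∀ x, Ps x = ∏ j ∈ range x, (if ¬ 3 ∣ j then j else 1) := by
    intro x; rw [Ps, Fs, Finset.prod_filter]
  rw [key, key]
  have h1 : 3*(2*N) = 3*N + 3*N := by ring
  rw [h1, Finset.prod_range_add]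
  congr 1
  rw [Fs, Finset.prod_filter]
  refine Finset.prod_congr rfl fun j _ => ?_
  have h3 : (3 ∣ 3*N + j) ↔ (3 ∣ j) := by
    constructor <;> intro h <;> omega
  by_cases hj : 3 ∣ j <;> simp [hj, h3]

lemma key_nat (N : ℕ) (hN : 0 < N) :
    (2*(3*N)).choose (3*N) * Ps (3*N) = (2*N).choose N * ∏ j ∈ Fs (3*N), (3*N + j) := by
  have e1 : (2*(3*N))! = (2*(3*N)).choose (3*N) * ((3*N)! * (3*N)!) := by
    have h := Nat.choose_mul_factorial_mul_factorial
      (Nat.le_mul_of_pos_left (3*N) (by norm_num) : 3*N ≤ 2*(3*N))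
    rw [show 2*(3*N) - 3*N = 3*N by omega] at h
    rw [← h]; ring
  have e2 : (2*N)! = (2*N).choose N * (N ! * N !) := by
    have h := Nat.choose_mul_factorial_mul_factorial
      (Nat.le_mul_of_pos_left N (by norm_num) : N ≤ 2*N)
    rw [show 2*N - N = N by omega] at h
    rw [← h]; ring
  have e3 : (3*(2*N))! = 3^(2*N) * (2*N)! * Ps (3*(2*N)) := fact_split (2*N)
  have e4 : (3*N)! = 3^N * N ! * Ps (3*N) := fact_split N
  have lhs : 3^(2*N) * (N ! * N !) * Ps (3*N) *
      ((2*(3*N)).choose (3*N) * Ps (3*N)) = 3^(2*N) * (N ! * N !) * Ps (3*N) *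
      ((2*N).choose N * ∏ j ∈ Fs (3*N), (3*N + j)) := by
    have h1 : (2*(3*N))! = (3*(2*N))! := by ring_nf
    calc 3^(2*N) * (N ! * N !) * Ps (3*N) * ((2*(3*N)).choose (3*N) * Ps (3*N))
        = (2*(3*N)).choose (3*N) * ((3^N * N ! * Ps (3*N)) * (3^N * N ! * Ps (3*N))) := by ring
      _ = (2*(3*N)).choose (3*N) * ((3*N)! * (3*N)!) := by rw [← e4]
      _ = (2*(3*N))! := by rw [← e1]
      _ = (3*(2*N))! := h1
      _ = 3^(2*N) * (2*N)! * Ps (3*(2*N)) := e3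
      _ = 3^(2*N) * ((2*N).choose N * (N ! * N !)) * (Ps (3*N) * ∏ j ∈ Fs (3*N), (3*N + j)) := by
          rw [← e2, Ps_shift]
      _ = 3^(2*N) * (N ! * N !) * Ps (3*N) * ((2*N).choose N * ∏ j ∈ Fs (3*N), (3*N + j)) := by
          ring
  have hpos : 0 < 3^(2*N) * (N ! * N !) * Ps (3*N) :=
    Nat.mul_pos (Nat.mul_pos (Nat.pow_pos (by norm_num))
      (Nat.mul_pos (Nat.factorial_pos N) (Nat.factorial_pos N))) (Ps_pos _)
  exact Nat.eq_of_mul_eq_mul_left hpos lhs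

lemma zmod3_addself : ∀ x : ZMod 3, x + x = 0 → x = 0 := by decide

lemma core (k : ℕ) (hk : 1 ≤ k) :
    ((∏ j ∈ Fs (3*3^k), (3*3^k + j) : ℕ) : ZMod (3^(3*k+2)))
      = (Ps (3*3^k) : ZMod (3^(3*k+2))) := by
  set N := 3^k with hN
  set M := 3*N with hM
  have h3M : 3 ∣ M := ⟨N, rfl⟩
  have h3N : 3 ∣ N := by rw [hN]; exact dvd_pow_self 3 (by omega)
  have hmem : ∀ j ∈ Fs M, 1 ≤ j ∧ j < M ∧ ¬ 3 ∣ j := by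
    intro j hj; simp only [Fs, mem_filter, mem_range] at hj
    exact ⟨by omega, hj.1, hj.2⟩
  have hbijrev : ∀ (f g : ℕ → ℕ), (∀ a ∈ Fs M, f a = g (M - a)) →
      ∏ j ∈ Fs M, f j = ∏ j ∈ Fs M, g j := by
    intro f g hfg
    refine Finset.prod_bij' (fun a _ => M - a) (fun b _ => M - b) ?_ ?_ ?_ ?_ hfg
    · intro a ha; have := hmem a ha
      simp only [Fs, mem_filter, mem_range]; omega
    · intro b hb; have := hmem b hb
      simp only [Fs, mem_filter, mem_range]; omega
    · intro a ha; have := hmem a ha; omega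
    · intro b hb; have := hmem b hb; omega
  have hQQ : (∏ j ∈ Fs M, (M + j)) * (∏ j ∈ Fs M, (M + j))
      = ∏ j ∈ Fs M, (j*(M-j) + 2*M^2) := by
    have h1 : (∏ j ∈ Fs M, (M + j)) = ∏ j ∈ Fs M, (2*M - j) := by
      apply hbijrev; intro a ha; have := hmem a ha; omega
    nth_rewrite 2 [h1]
    rw [← Finset.prod_mul_distrib]
    refine Finset.prod_congr rfl fun j hj => ?_
    have hj' := hmem j hj
    obtain ⟨d, hd⟩ := Nat.exists_eq_add_of_le (le_of_lt hj'.2.1)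
    have e1 : M - j = d := by omega
    have e2 : 2*M - j = j + 2*d := by omega
    rw [e1, e2, hd]; ring
  have hPP : Ps M * Ps M = ∏ j ∈ Fs M, (j*(M-j)) := by
    have h1 : Ps M = ∏ j ∈ Fs M, (M - j) := by
      rw [Ps]; apply hbijrev; intro a ha; have := hmem a ha; omega
    nth_rewrite 2 [h1]
    rw [Ps, ← Finset.prod_mul_distrib]
  have hQR : ((∏ j ∈ Fs M, (M + j) : ℕ) : ZMod (3^(3*k+2)))^2
      = ∏ j ∈ Fs M, (((j*(M-j) : ℕ) : ZMod (3^(3*k+2))) + ((2*M^2 : ℕ) : ZMod (3^(3*k+2)))) := by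
    rw [sq, ← Nat.cast_mul, hQQ, Nat.cast_prod]
    exact Finset.prod_congr rfl fun j _ => by rw [Nat.cast_add]
  have hPR : ((Ps M : ℕ) : ZMod (3^(3*k+2)))^2
      = ∏ j ∈ Fs M, ((j*(M-j) : ℕ) : ZMod (3^(3*k+2))) := by
    rw [sq, ← Nat.cast_mul, hPP, Nat.cast_prod]
  obtain ⟨r, hr⟩ := prod_add_c (Fs M) (fun j => ((j*(M-j) : ℕ) : ZMod (3^(3*k+2))))
    ((2*M^2 : ℕ) : ZMod (3^(3*k+2)))
  have h9 : (3:ℕ)^(k+1) = 3*3^k := by rw [_root_.pow_succ]; ring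
  have hc2 : (((2*M^2 : ℕ) : ZMod (3^(3*k+2))))^2 = 0 := by
    rw [← Nat.cast_pow, ZMod.natCast_eq_zero_iff]
    have he : (2*M^2)^2 = 3^(4*k+4) * 4 := by
      rw [hM, hN, show 4*k+4 = (k+1)*4 by ring, pow_mul, h9]; ring
    rw [he]
    exact Dvd.dvd.mul_right (pow_dvd_pow 3 (by omega)) 4
  have hMS : ((M:ℕ) : ZMod (3^k)) = 0 := by
    rw [ZMod.natCast_eq_zero_iff, hM, hN]
    exact Dvd.dvd.mul_left dvd_rfl 3
  have hNS : ((N:ℕ) : ZMod (3^k)) = 0 := by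
    rw [ZMod.natCast_eq_zero_iff]
  have hu_eq : ∀ i ∈ Fs M, ((i*(M-i) : ℕ) : ZMod (3^k)) = -((i : ZMod (3^k)))^2 := by
    intro i hi
    have h := hmem i hi
    rw [Nat.cast_mul, Nat.cast_sub (le_of_lt h.2.1), hMS]
    ring
  have hu_unit : ∀ i ∈ Fs M, IsUnit ((i*(M-i) : ℕ) : ZMod (3^k)) := by
    intro i hi
    rw [hu_eq i hi]
    exact ((unit_of_notdvd (hmem i hi).2.2).pow 2).neg
  have hT : (∑ j ∈ Fs M, (((j : ZMod (3^k)))⁻¹)^2) = 0 := by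
    have hsplit : ∑ j ∈ Fs M, (((j : ZMod (3^k)))⁻¹)^2
        = 3 * ∑ j ∈ Fs N, (((j : ZMod (3^k)))⁻¹)^2 := by
      rw [Fs, Finset.sum_filter, Fs, Finset.sum_filter]
      have hMN : M = N + (N + N) := by rw [hM]; ring
      rw [hMN, Finset.sum_range_add, Finset.sum_range_add]
      have hshift : ∀ d : ℕ, 3 ∣ d → ((d : ZMod (3^k)) = 0) →
          (∑ j ∈ range N, if ¬ 3 ∣ (d + j) then (((d + j : ℕ) : ZMod (3^k)))⁻¹^2 else 0)
          = ∑ j ∈ range N, if ¬ 3 ∣ j then (((j:ℕ) : ZMod (3^k)))⁻¹^2 else 0 := by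
        intro d hd hdS
        refine Finset.sum_congr rfl fun j _ => ?_
        have hiff : (3 ∣ d + j) ↔ 3 ∣ j := by constructor <;> intro h <;> omega
        have hcast : ((d + j : ℕ) : ZMod (3^k)) = (j : ZMod (3^k)) := by
          rw [Nat.cast_add, hdS, zero_add]
        by_cases hj : 3 ∣ j <;> simp [hj, hiff, hcast]
      have h2N : ((N + N : ℕ) : ZMod (3^k)) = 0 := by
        rw [Nat.cast_add, hNS, zero_add]
      have hsh1 := hshift N h3N hNS
      have hsh2 : (∑ j ∈ range N, if ¬ 3 ∣ (N + N + j) then (((N + N + j : ℕ) : ZMod (3^k)))⁻¹^2 else 0)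
          = ∑ j ∈ range N, if ¬ 3 ∣ j then (((j:ℕ) : ZMod (3^k)))⁻¹^2 else 0 :=
        hshift (N + N) (by omega) h2N
      simp only [← add_assoc]
      rw [hsh1, hsh2]
      ring
    haveI : NeZero (3^k) := ⟨pow_ne_zero k (by norm_num)⟩
    have hinv : ∑ j ∈ Fs N, (((j : ZMod (3^k)))⁻¹)^2 = ∑ j ∈ Fs N, ((j : ZMod (3^k)))^2 := by
      have hval : ∀ a, ((((((a : ZMod (3^k)))⁻¹).val : ℕ)) : ZMod (3^k)) = ((a : ZMod (3^k)))⁻¹ := by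
        intro a; rw [ZMod.natCast_val, ZMod.cast_id]
      refine Finset.sum_bij' (fun a _ => (((a : ZMod (3^k)))⁻¹).val)
        (fun a _ => (((a : ZMod (3^k)))⁻¹).val) ?_ ?_ ?_ ?_ ?_
      · intro a ha
        simp only [Fs, mem_filter, mem_range] at ha ⊢
        exact ⟨ZMod.val_lt _, notdvd_val hk (zmod_inv_unit (unit_of_notdvd ha.2))⟩
      · intro a ha
        simp only [Fs, mem_filter, mem_range] at ha ⊢
        exact ⟨ZMod.val_lt _, notdvd_val hk (zmod_inv_unit (unit_of_notdvd ha.2))⟩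
      · intro a ha
        simp only [Fs, mem_filter, mem_range] at ha
        rw [hval, zmod_inv_inv (unit_of_notdvd ha.2), ZMod.val_cast_of_lt ha.1]
      · intro a ha
        simp only [Fs, mem_filter, mem_range] at ha
        rw [hval, zmod_inv_inv (unit_of_notdvd ha.2), ZMod.val_cast_of_lt ha.1]
      · intro a ha
        rw [hval]
    rw [hsplit, hinv]
    have hcast : ∑ j ∈ Fs N, ((j : ZMod (3^k)))^2 = ((∑ j ∈ Fs N, j^2 : ℕ) : ZMod (3^k)) := by
      rw [Nat.cast_sum]
      exact Finset.sum_congr rfl fun j _ => by rw [Nat.cast_pow]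
    have h3c : (3 : ZMod (3^k)) = ((3:ℕ) : ZMod (3^k)) := by push_cast; ring
    rw [hcast, h3c, ← Nat.cast_mul, ZMod.natCast_eq_zero_iff]
    exact div_sumsq k hk
  have hE : (3^k:ℕ) ∣ ∑ j ∈ Fs M, ∏ i ∈ (Fs M).erase j, (i*(M-i)) := by
    rw [← ZMod.natCast_eq_zero_iff, Nat.cast_sum]
    have h1 : ∀ j ∈ Fs M, ((∏ i ∈ (Fs M).erase j, (i*(M-i)) : ℕ) : ZMod (3^k))
        = ∏ i ∈ (Fs M).erase j, ((i*(M-i) : ℕ) : ZMod (3^k)) := fun j _ => Nat.cast_prod _ _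
    rw [Finset.sum_congr rfl h1, sum_erase_prod _ _ hu_unit]
    have h2 : ∑ j ∈ Fs M, (((j*(M-j) : ℕ) : ZMod (3^k)))⁻¹
        = ∑ j ∈ Fs M, -((((j : ZMod (3^k)))⁻¹)^2) := by
      refine Finset.sum_congr rfl fun j hj => ?_
      apply zmod_inv_eq
      rw [hu_eq j hj, neg_mul_neg, ← mul_pow,
        ZMod.mul_inv_of_unit _ (unit_of_notdvd (hmem j hj).2.2), one_pow]
    rw [h2, Finset.sum_neg_distrib, hT]
    simp
  have hcE : ((2*M^2 : ℕ) : ZMod (3^(3*k+2))) *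
      (∑ j ∈ Fs M, ∏ i ∈ (Fs M).erase j, ((i*(M-i) : ℕ) : ZMod (3^(3*k+2)))) = 0 := by
    have h1 : ∀ j ∈ Fs M, ∏ i ∈ (Fs M).erase j, ((i*(M-i) : ℕ) : ZMod (3^(3*k+2)))
        = ((∏ i ∈ (Fs M).erase j, (i*(M-i)) : ℕ) : ZMod (3^(3*k+2))) :=
      fun j _ => (Nat.cast_prod _ _).symm
    rw [Finset.sum_congr rfl h1, ← Nat.cast_sum, ← Nat.cast_mul,
      ZMod.natCast_eq_zero_iff]
    obtain ⟨u, hu⟩ := hE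
    rw [hu, hM, hN]
    exact ⟨2*u, by ring⟩
  have hQ2P2 : ((∏ j ∈ Fs M, (M + j) : ℕ) : ZMod (3^(3*k+2)))^2
      = ((Ps M : ℕ) : ZMod (3^(3*k+2)))^2 := by
    rw [hQR, hr, hcE, hc2, ← hPR]
    ring
  have hQP3 : ¬ 3 ∣ ((∏ j ∈ Fs M, (M + j)) + Ps M) := by
    intro hdvd
    haveI : Fact (Nat.Prime 3) := ⟨by norm_num⟩
    have hQ3 : ((∏ j ∈ Fs M, (M + j) : ℕ) : ZMod 3) = ((Ps M : ℕ) : ZMod 3) := by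
      rw [Ps, Nat.cast_prod, Nat.cast_prod]
      refine Finset.prod_congr rfl fun j _ => ?_
      have hm0 : ((M:ℕ) : ZMod 3) = 0 := by
        rw [ZMod.natCast_eq_zero_iff]; exact h3M
      rw [Nat.cast_add, hm0, zero_add]
    have hP3 : ((Ps M : ℕ) : ZMod 3) ≠ 0 := by
      rw [Ne, ZMod.natCast_eq_zero_iff]
      exact not_dvd_Ps M
    have hz : (((∏ j ∈ Fs M, (M + j)) + Ps M : ℕ) : ZMod 3) = 0 := by
      rw [ZMod.natCast_eq_zero_iff]; exact hdvd
    rw [Nat.cast_add, hQ3] at hz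
    exact hP3 (zmod3_addself _ hz)
  have hQPunit : IsUnit (((∏ j ∈ Fs M, (M + j) : ℕ) : ZMod (3^(3*k+2)))
      + ((Ps M : ℕ) : ZMod (3^(3*k+2)))) := by
    rw [← Nat.cast_add]
    exact unit_of_notdvd hQP3
  have hfinal : (((∏ j ∈ Fs M, (M + j) : ℕ) : ZMod (3^(3*k+2)))
      - ((Ps M : ℕ) : ZMod (3^(3*k+2)))) *
      (((∏ j ∈ Fs M, (M + j) : ℕ) : ZMod (3^(3*k+2))) + ((Ps M : ℕ) : ZMod (3^(3*k+2)))) = 0 := by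
    have hx : ∀ x y : ZMod (3^(3*k+2)), (x - y) * (x + y) = x^2 - y^2 := fun x y => by ring
    rw [hx, hQ2P2, sub_self]
  have h0 := (IsUnit.mul_left_eq_zero hQPunit).mp hfinal
  exact sub_eq_zero.mp h0

lemma step (k : ℕ) (hk : 1 ≤ k) :
    (2 * 3 ^ (k+1)).choose (3 ^ (k+1)) ≡ (2 * 3 ^ k).choose (3 ^ k) [MOD 3 ^ (3*k+2)] := by
  rw [← ZMod.natCast_eq_natCast_iff]
  have hkey := key_nat (3^k) (Nat.pow_pos (by norm_num))
  have hc := core k hk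
  have hcast : (((2*(3*3^k)).choose (3*3^k) : ℕ) : ZMod (3^(3*k+2)))
        * ((Ps (3*3^k) : ℕ) : ZMod (3^(3*k+2)))
      = (((2*3^k).choose (3^k) : ℕ) : ZMod (3^(3*k+2)))
        * ((Ps (3*3^k) : ℕ) : ZMod (3^(3*k+2))) := by
    rw [← Nat.cast_mul, hkey, Nat.cast_mul, hc]
  have hPunit : IsUnit ((Ps (3*3^k) : ℕ) : ZMod (3^(3*k+2))) := unit_of_notdvd (not_dvd_Ps _)
  have h1 := hPunit.mul_right_cancel hcast
  have h2 : (3:ℕ)^(k+1) = 3*3^k := by rw [_root_.pow_succ]; ring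
  rw [h2]
  exact h1

theorem stmt_16 (e f : ℕ) (he : 0 < e) (hef : e ≤ f) :
    (2 * 3 ^ f).choose (3 ^ f) ≡ (2 * 3 ^ e).choose (3 ^ e) [MOD 3 ^ (3 * e + 2)] := by
  induction f, hef using Nat.le_induction with
  | base => rfl
  | succ n hn ih =>
    have hstep := step n (le_trans he hn)
    have hweak : (2 * 3 ^ (n+1)).choose (3 ^ (n+1)) ≡ (2 * 3 ^ n).choose (3 ^ n)
        [MOD 3 ^ (3*e+2)] :=
      Nat.ModEq.of_dvd (pow_dvd_pow 3 (by omega)) hstep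
    exact hweak.trans ih
end

section
/- The 3-adic limit of C(2·3^f, 3^f) as f → ∞ exists; that is, the sequence f ↦ C(2·3^f, 3^f) is a Cauchy sequence in the 3-adic integers. -/
open Polynomial

lemma key_dvd (f : ℕ) :
    (3 ^ (f + 1) : ℤ) ∣
      ((2 * 3 ^ (f + 1)).choose (3 ^ (f + 1)) : ℤ) - ((2 * 3 ^ f).choose (3 ^ f) : ℤ) := by
  have h3 : ((3 : ℕ) : ℤ[X]) ∣ (1 + X) ^ 6 - expand ℤ 3 ((1 + X) ^ 2) := by
    refine ⟨2 * X + 5 * X ^ 2 + 6 * X ^ 3 + 5 * X ^ 4 + 2 * X ^ 5, ?_⟩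
    rw [map_pow, map_add, map_one, expand_X]
    push_cast
    ring_nf
  have hd := dvd_sub_pow_of_dvd_sub h3 f
  obtain ⟨q, hq⟩ := hd
  have hcoeff := congrArg (fun p : ℤ[X] => p.coeff (3 ^ (f + 1))) hq
  have hl : ((((1:ℤ[X]) + X) ^ 6) ^ 3 ^ f).coeff (3 ^ (f + 1))
      = ((2 * 3 ^ (f + 1)).choose (3 ^ (f + 1)) : ℤ) := by
    rw [← pow_mul, coeff_one_add_X_pow]
    congr 1
    ring_nf
  have hr : ((expand ℤ 3 ((1 + X) ^ 2)) ^ 3 ^ f).coeff (3 ^ (f + 1))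
      = ((2 * 3 ^ f).choose (3 ^ f) : ℤ) := by
    rw [← map_pow, ← pow_mul, pow_succ, coeff_expand_mul (by norm_num),
      coeff_one_add_X_pow]
  rw [coeff_sub, hl, hr] at hcoeff
  refine ⟨q.coeff (3 ^ (f + 1)), ?_⟩
  rw [hcoeff]
  have h33 : ((3 : ℕ) : ℤ[X]) = C 3 := by simp
  rw [h33, ← C_pow, coeff_C_mul]

theorem stmt_17 :
    CauchySeq (fun f : ℕ => ((2 * 3 ^ f).choose (3 ^ f) : ℤ_[3])) := by
  apply cauchySeq_of_le_geometric (1/3 : ℝ) 1 (by norm_num)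
  intro f
  have hdvd := key_dvd f
  have heq : ((2 * 3 ^ f).choose (3 ^ f) : ℤ_[3]) - ((2 * 3 ^ (f+1)).choose (3 ^ (f+1)) : ℤ_[3])
      = (((((2 * 3 ^ f).choose (3 ^ f) : ℤ) - ((2 * 3 ^ (f+1)).choose (3 ^ (f+1)) : ℤ)) : ℤ) : ℤ_[3]) := by
    push_cast; ring
  rw [dist_eq_norm, heq]
  have hnorm : ‖((((2 * 3 ^ f).choose (3 ^ f) : ℤ) - ((2 * 3 ^ (f+1)).choose (3 ^ (f+1)) : ℤ) : ℤ) : ℤ_[3])‖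
      ≤ ((3 : ℕ) : ℝ) ^ (-((f + 1 : ℕ) : ℤ)) := by
    rw [PadicInt.norm_int_le_pow_iff_dvd]
    exact dvd_sub_comm.mp hdvd
  refine hnorm.trans ?_
  have h1 : (1:ℝ) * (1/3)^f = ((3:ℝ)^f)⁻¹ := by rw [one_mul, div_pow, one_pow, one_div]
  rw [h1, zpow_neg, zpow_natCast, inv_le_inv₀ (by positivity) (by positivity)]
  push_cast
  exact pow_le_pow_right₀ (by norm_num) (by omega)
end

section
/- For every positive integer n, the identity ∑_{k=1}^{n} (4^k/(2k))·C(2k,k)^{-1} = 4^n·C(2n,n)^{-1} − 1 holds in the rational numbers. -/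
theorem stmt_19 (n : ℕ) (hn : 0 < n) :
    ∑ k ∈ Finset.Icc 1 n, (4 : ℚ) ^ k / (2 * k) * (((2 * k).choose k : ℚ))⁻¹ =
      4 ^ n * (((2 * n).choose n : ℚ))⁻¹ - 1 := by
  induction n, hn using Nat.le_induction with
  | base => norm_num
  | succ n hn ih =>
    rw [Finset.sum_Icc_succ_top (by omega : 1 ≤ n + 1), ih]
    have key : ((n : ℕ) + 1) * Nat.centralBinom (n + 1) = 2 * (2 * n + 1) * Nat.centralBinom n :=
      Nat.succ_mul_centralBinom_succ n
    have h1 : ((2 * n).choose n : ℚ) = (Nat.centralBinom n : ℚ) := by rw [Nat.centralBinom]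
    have h2 : ((2 * (n + 1)).choose (n + 1) : ℚ) = (Nat.centralBinom (n + 1) : ℚ) := by
      rw [Nat.centralBinom]
    have hc : (Nat.centralBinom n : ℚ) ≠ 0 := by
      exact_mod_cast (Nat.centralBinom_pos n).ne'
    have hc' : (Nat.centralBinom (n + 1) : ℚ) ≠ 0 := by
      exact_mod_cast (Nat.centralBinom_pos (n + 1)).ne'
    have keyQ : ((n : ℚ) + 1) * (Nat.centralBinom (n + 1) : ℚ)
        = 2 * (2 * n + 1) * (Nat.centralBinom n : ℚ) := by exact_mod_cast key
    rw [h1, h2]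
    have hn1 : ((n : ℚ) + 1) ≠ 0 := by positivity
    have hstep : (4 : ℚ) ^ (n + 1) * ((Nat.centralBinom (n + 1) : ℚ))⁻¹
        = 4 ^ n * ((Nat.centralBinom n : ℚ))⁻¹
          + 4 ^ (n + 1) / (2 * ((n : ℚ) + 1)) * ((Nat.centralBinom (n + 1) : ℚ))⁻¹ := by
      field_simp
      linear_combination (-2 * (4 : ℚ) ^ n) * keyQ
    push_cast
    rw [hstep]
    ring
end
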